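/- arXiv:1409.5027 — 3 statements merged into one kernel-verified Lean document; each statement's English description precedes it below -/
import Mathlib

section
/- Let p be a prime and let W be the ZMod p-vector space of all functions (ZMod p)^ℕ → ZMod p that depend only on finitely many coordinates (equivalently, the linear span of all Kaloujnine monomials e_n; equivalently, the continuous, i.e., locally constant, functions from (ZMod p)^ℕ to ZMod p). If V ⊆ W is a ZMod p-linear subspace invariant under the map f ↦ f ∘ g⁻¹ for every g ∈ K_p, then either V = {0}, or V = W, or V = U_n for some n ∈ ℕ. -/
/-- The triangular-form predicate defining the group `K_p`. -/
def IsTriangular (p : ℕ) (g : Equiv.Perm (ℕ → ZMod p)) : Prop :=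
  ∃ a : (n : ℕ) → (Fin n → ZMod p) → ZMod p,
    ∀ (x : ℕ → ZMod p) (n : ℕ), g x n = x n + a n (fun i : Fin n => x (i : ℕ))

/-- The Kaloujnine monomial `e_n(x) = Π_i x_i^{k_i}`, where `k_0, k_1, …` are the base-`p`
digits of `n`. -/
def kalMonomial (p n : ℕ) : (ℕ → ZMod p) → ZMod p :=
  fun x => ∏ i ∈ Finset.range (n + 1), x i ^ (n / p ^ i % p)

/-- `U_n`: the `ZMod p`-linear span of the monomials `e_0, e_1, …, e_n`. -/
def Uspan (p n : ℕ) : Submodule (ZMod p) ((ℕ → ZMod p) → ZMod p) :=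
  Submodule.span (ZMod p) (kalMonomial p '' {m : ℕ | m ≤ n})

/-- `W`: the linear span of all Kaloujnine monomials, i.e. the space of functions
`(ZMod p)^ℕ → ZMod p` depending only on finitely many coordinates (equivalently, the
continuous = locally constant functions). -/
def Wspan (p : ℕ) : Submodule (ZMod p) ((ℕ → ZMod p) → ZMod p) :=
  Submodule.span (ZMod p) (Set.range (kalMonomial p))

set_option linter.unusedSectionVars false
set_option linter.unusedVariables false
set_option maxHeartbeats 1000000

namespace KpAux

variable {p : ℕ} [hp : Fact p.Prime]

/-- base-p digit -/
def dgt (p k n : ℕ) : ℕ := n / p ^ k % p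

variable {p : ℕ} [hp : Fact p.Prime]

lemma p_pos : 0 < p := hp.out.pos
lemma p_two_le : 2 ≤ p := hp.out.two_le

lemma dgt_lt (k n : ℕ) : dgt p k n < p := Nat.mod_lt _ p_pos

lemma dgt_eq_zero_of_lt {k n : ℕ} (h : n < p ^ k) : dgt p k n = 0 := by
  unfold dgt
  rw [Nat.div_eq_of_lt h]
  simp

lemma dgt_succ (k n : ℕ) : dgt p (k+1) n = dgt p k (n / p) := by
  unfold dgt
  rw [Nat.div_div_eq_div_mul, ← pow_succ']

lemma mod_pow_succ (s n : ℕ) : n % p ^ (s+1) = p * ((n / p) % p ^ s) + n % p := by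
  have h1 : n % p ^ (s+1) % p = n % p := Nat.mod_mod_of_dvd _ (dvd_pow_self p (Nat.succ_ne_zero s))
  have h2 : n % p ^ (s+1) / p = (n / p) % p ^ s := by
    rw [pow_succ']
    exact Nat.mod_mul_right_div_self n p (p ^ s)
  conv_lhs => rw [← Nat.div_add_mod (n % p ^ (s+1)) p, h1, h2]

lemma sum_dgt_mod (s n : ℕ) : ∑ i ∈ Finset.range s, dgt p i n * p ^ i = n % p ^ s := by
  induction s generalizing n with
  | zero => simp [Nat.mod_one]
  | succ s ih =>
    rw [Finset.sum_range_succ' (fun i => dgt p i n * p ^ i)]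
    have h1 : ∀ i, dgt p (i+1) n * p ^ (i+1) = p * (dgt p i (n / p) * p ^ i) := by
      intro i; rw [dgt_succ, pow_succ']; ring
    have h0 : dgt p 0 n * p ^ 0 = n % p := by simp [dgt]
    rw [h0, mod_pow_succ]
    congr 1
    rw [← ih (n / p), Finset.mul_sum]
    exact Finset.sum_congr rfl fun i _ => h1 i

lemma sum_dgt {s n : ℕ} (h : n < p ^ s) : ∑ i ∈ Finset.range s, dgt p i n * p ^ i = n := by
  rw [sum_dgt_mod, Nat.mod_eq_of_lt h]

lemma dgt_sum {d : ℕ → ℕ} (hd : ∀ i, d i < p) :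
    ∀ s k, dgt p k (∑ i ∈ Finset.range s, d i * p ^ i) =
      if k < s then d k else 0 := by
  intro s
  induction s generalizing d with
  | zero => simp [dgt]
  | succ s ih =>
    intro k
    have hsum : ∑ i ∈ Finset.range (s+1), d i * p ^ i
        = p * (∑ i ∈ Finset.range s, d (i+1) * p ^ i) + d 0 := by
      rw [Finset.sum_range_succ' (fun i => d i * p ^ i), Finset.mul_sum]
      simp only [pow_zero, mul_one]
      congr 1
      exact Finset.sum_congr rfl fun i _ => by rw [pow_succ']; ring
    match k with
    | 0 =>
      simp only [hsum, dgt, pow_zero, Nat.div_one, if_pos (Nat.succ_pos s)]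
      rw [Nat.mul_add_mod]
      exact Nat.mod_eq_of_lt (hd 0)
    | (k+1) =>
      rw [hsum, dgt_succ]
      have : (p * (∑ i ∈ Finset.range s, d (i+1) * p ^ i) + d 0) / p
          = ∑ i ∈ Finset.range s, d (i+1) * p ^ i := by
        rw [Nat.mul_add_div p_pos, Nat.div_eq_of_lt (hd 0), add_zero]
      rw [this, ih (fun i => hd _) k]
      simp [Nat.succ_lt_succ_iff]

lemma sum_lt_pow {d : ℕ → ℕ} (hd : ∀ i, d i < p) (s : ℕ) :
    ∑ i ∈ Finset.range s, d i * p ^ i < p ^ s := by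
  induction s with
  | zero => simpa using Nat.one_pos
  | succ s ih =>
    rw [Finset.sum_range_succ, pow_succ]
    calc ∑ i ∈ Finset.range s, d i * p ^ i + d s * p ^ s
        < p ^ s + d s * p ^ s := by omega
      _ = (d s + 1) * p ^ s := by ring
      _ ≤ p * p ^ s := Nat.mul_le_mul_right _ (hd s)
      _ = p ^ s * p := by ring

lemma lt_pow_self' (n : ℕ) : n < p ^ n :=
  Nat.lt_pow_self hp.out.one_lt

lemma prod_dgt_extend {n s t : ℕ} (hst : s ≤ t) (h : n < p ^ s) (x : ℕ → ZMod p) :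
    ∏ i ∈ Finset.range t, x i ^ dgt p i n = ∏ i ∈ Finset.range s, x i ^ dgt p i n := by
  symm
  apply Finset.prod_subset (Finset.range_subset_range.2 hst)
  intro i hi hni
  have hsi : s ≤ i := by
    simp only [Finset.mem_range] at hi hni
    omega
  have : n < p ^ i := lt_of_lt_of_le h (Nat.pow_le_pow_right p_pos hsi)
  rw [dgt_eq_zero_of_lt this, pow_zero]

lemma kal_eq_prod {n s : ℕ} (h : n < p ^ s) (x : ℕ → ZMod p) :
    kalMonomial p n x = ∏ i ∈ Finset.range s, x i ^ dgt p i n := by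
  have hdef : kalMonomial p n x = ∏ i ∈ Finset.range (n+1), x i ^ dgt p i n := rfl
  have hn1 : n < p ^ (n+1) :=
    lt_of_lt_of_le (lt_pow_self' n) (Nat.pow_le_pow_right p_pos (Nat.le_succ n))
  rcases le_total s (n+1) with hc | hc
  · rw [hdef, prod_dgt_extend hc h]
  · rw [hdef, ← prod_dgt_extend hc hn1]

/-- a product of powers with digit exponents is a Kaloujnine monomial. -/
lemma mono_eq_kal {d : ℕ → ℕ} (hd : ∀ i, d i < p) (s : ℕ) (x : ℕ → ZMod p) :
    ∏ i ∈ Finset.range s, x i ^ d i = kalMonomial p (∑ i ∈ Finset.range s, d i * p ^ i) x := by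
  rw [kal_eq_prod (sum_lt_pow hd s) x]
  apply Finset.prod_congr rfl
  intro i hi
  rw [dgt_sum hd s i, if_pos (Finset.mem_range.1 hi)]

/-- power reduction as functions on `ZMod p`. -/
lemma pow_reduce (x : ZMod p) (d : ℕ) :
    x ^ (d + (p - 1)) = x ^ (if d = 0 then p - 1 else d) := by
  by_cases hx : x = 0
  · subst hx
    by_cases hd : d = 0
    · simp [hd]
    · rw [if_neg hd, zero_pow hd, zero_pow]
      omega
  · rw [pow_add, ZMod.pow_card_sub_one_eq_one hx, mul_one]
    by_cases hd : d = 0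
    · simp [hd, ZMod.pow_card_sub_one_eq_one hx]
    · rw [if_neg hd]

/-- strict span: span of `e_m` for `m < n`. -/
def Ult (p : ℕ) (n : ℕ) : Submodule (ZMod p) ((ℕ → ZMod p) → ZMod p) :=
  Submodule.span (ZMod p) (kalMonomial p '' {m : ℕ | m < n})

lemma Ult_mono {a b : ℕ} (h : a ≤ b) : Ult p a ≤ Ult p b :=
  Submodule.span_mono (Set.image_mono fun m hm => lt_of_lt_of_le hm h)

lemma Ult_zero : Ult p 0 = ⊥ := by
  have : {m : ℕ | m < 0} = ∅ := by ext m; simp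
  simp [Ult, this]

lemma kal_mem_Ult {m n : ℕ} (h : m < n) : kalMonomial p m ∈ Ult p n :=
  Submodule.subset_span ⟨m, h, rfl⟩

lemma Uspan_eq_Ult (n : ℕ) : Uspan p n = Ult p (n+1) := by
  unfold Uspan Ult
  congr 1
  ext f
  constructor
  · rintro ⟨m, hm, rfl⟩; exact ⟨m, Nat.lt_succ_of_le hm, rfl⟩
  · rintro ⟨m, hm, rfl⟩; exact ⟨m, Nat.lt_succ_iff.1 hm, rfl⟩

lemma mem_Ult_succ_iff {f : (ℕ → ZMod p) → ZMod p} {n : ℕ} :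
    f ∈ Ult p (n+1) ↔ ∃ (c : ZMod p) (z : (ℕ → ZMod p) → ZMod p), z ∈ Ult p n ∧ f = c • kalMonomial p n + z := by
  have hset : {m : ℕ | m < n+1} = insert n {m : ℕ | m < n} := by
    ext m; simp [Nat.lt_succ_iff_lt_or_eq, or_comm]; exact le_iff_eq_or_lt
  rw [Ult, hset, Set.image_insert_eq, Submodule.mem_span_insert]
  rfl

lemma Wspan_eq_iSup : Wspan p = ⨆ n, Ult p n := by
  rw [Wspan, show Set.range (kalMonomial p) = ⋃ n, kalMonomial p '' {m : ℕ | m < n} by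
    ext f
    constructor
    · rintro ⟨m, rfl⟩
      exact Set.mem_iUnion.2 ⟨m+1, ⟨m, Nat.lt_succ_self m, rfl⟩⟩
    · rintro h
      obtain ⟨n, m, _, rfl⟩ := Set.mem_iUnion.1 h
      exact ⟨m, rfl⟩]
  exact Submodule.span_iUnion _

lemma mem_Wspan {f : (ℕ → ZMod p) → ZMod p} (h : f ∈ Wspan p) : ∃ n, f ∈ Ult p n := by
  rw [Wspan_eq_iSup] at h
  exact (Submodule.mem_iSup_of_directed _ (fun a b => ⟨max a b,
    Ult_mono (le_max_left a b), Ult_mono (le_max_right a b)⟩)).1 h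

/-! power sums -/

lemma sum_pow_card_sub_one : ∑ t : ZMod p, t ^ (p - 1) = -1 := by
  haveI : NeZero p := ⟨hp.out.ne_zero⟩
  have h0 : (0 : ZMod p) ^ (p - 1) = 0 := by
    apply zero_pow
    have := hp.out.two_le; omega
  rw [← Finset.sum_erase_add _ _ (Finset.mem_univ (0 : ZMod p)), h0, add_zero]
  have : ∀ t ∈ Finset.univ.erase (0 : ZMod p), t ^ (p-1) = 1 := fun t ht =>
    ZMod.pow_card_sub_one_eq_one (Finset.ne_of_mem_erase ht)
  rw [Finset.sum_congr rfl this, Finset.sum_const, Finset.card_erase_of_mem (Finset.mem_univ _),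
    Finset.card_univ, ZMod.card, nsmul_eq_mul, mul_one]
  have h2 : 1 ≤ p := p_pos
  push_cast [Nat.cast_sub h2]
  simp [ZMod.natCast_self]

lemma sum_pow_lt {a : ℕ} (ha : a < p - 1) : ∑ t : ZMod p, t ^ a = 0 := by
  have := FiniteField.sum_pow_lt_card_sub_one (K := ZMod p) a (by rwa [ZMod.card])
  exact this

/-! the dual functional -/

def extFun (s : ℕ) (y : Fin s → ZMod p) : ℕ → ZMod p :=
  fun i => if h : i < s then y ⟨i, h⟩ else 0

def Lfun (p : ℕ) [Fact p.Prime] (n : ℕ) : ((ℕ → ZMod p) → ZMod p) →ₗ[ZMod p] ZMod p where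
  toFun f := ∑ y : Fin (n+1) → ZMod p,
    f (extFun (n+1) y) * ∏ i : Fin (n+1), (y i) ^ ((p-1) - dgt p (i : ℕ) n)
  map_add' f g := by
    simp [add_mul, Finset.sum_add_distrib]
  map_smul' c f := by
    simp [Finset.mul_sum, mul_assoc]

lemma Lfun_kal {n m : ℕ} (hm : m < p ^ (n+1)) :
    Lfun p n (kalMonomial p m)
      = ∏ i : Fin (n+1), ∑ t : ZMod p, t ^ (dgt p (i : ℕ) m + ((p-1) - dgt p (i : ℕ) n)) := by
  have hkal : ∀ y : Fin (n+1) → ZMod p,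
      kalMonomial p m (extFun (n+1) y) = ∏ i : Fin (n+1), (y i) ^ dgt p (i : ℕ) m := by
    intro y
    rw [kal_eq_prod hm, Finset.prod_range (fun i => extFun (n+1) y i ^ dgt p i m)]
    apply Finset.prod_congr rfl
    intro i _
    congr 1
    simp [extFun, i.isLt]
  show (∑ y : Fin (n+1) → ZMod p, kalMonomial p m (extFun (n+1) y) * ∏ i, (y i) ^ ((p-1) - dgt p (i:ℕ) n)) = _
  rw [Fintype.prod_sum (fun (i : Fin (n+1)) (t : ZMod p) => t ^ (dgt p (i : ℕ) m + ((p-1) - dgt p (i : ℕ) n)))]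
  apply Finset.sum_congr rfl
  intro y _
  rw [hkal y, ← Finset.prod_mul_distrib]
  exact Finset.prod_congr rfl fun i _ => (pow_add _ _ _).symm

lemma kal_not_mem_Ult (n : ℕ) : kalMonomial p n ∉ Ult p n := by
  intro hmem
  have hn : n < p ^ (n+1) :=
    lt_of_lt_of_le (lt_pow_self' n) (Nat.pow_le_pow_right p_pos (Nat.le_succ n))
  have hker : Ult p n ≤ LinearMap.ker (Lfun p n) := by
    rw [Ult, Submodule.span_le]
    rintro f ⟨m, hmn', rfl⟩
    have hmn : m < n := hmn'
    have hmlt : m < p ^ (n+1) := lt_trans hmn hn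
    rw [SetLike.mem_coe, LinearMap.mem_ker, Lfun_kal hmlt]
    -- find a digit where m is smaller than n
    have hex : ∃ i : Fin (n+1), dgt p (i : ℕ) m < dgt p (i : ℕ) n := by
      by_contra hc
      push_neg at hc
      have : n ≤ m := by
        calc n = ∑ i ∈ Finset.range (n+1), dgt p i n * p ^ i := (sum_dgt hn).symm
          _ ≤ ∑ i ∈ Finset.range (n+1), dgt p i m * p ^ i := by
              apply Finset.sum_le_sum
              intro i hi
              exact Nat.mul_le_mul_right _ (hc ⟨i, Finset.mem_range.1 hi⟩)
          _ = m := sum_dgt hmlt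
      omega
    obtain ⟨i, hi⟩ := hex
    apply Finset.prod_eq_zero (Finset.mem_univ i)
    apply sum_pow_lt
    have := dgt_lt (p := p) (i : ℕ) n
    omega
  have hzero : Lfun p n (kalMonomial p n) = 0 := hker hmem
  rw [Lfun_kal hn] at hzero
  have heq : ∀ i : Fin (n+1),
      ∑ t : ZMod p, t ^ (dgt p (i : ℕ) n + ((p-1) - dgt p (i : ℕ) n)) = -1 := by
    intro i
    have h1 : dgt p (i : ℕ) n + ((p-1) - dgt p (i : ℕ) n) = p - 1 := by
      have := dgt_lt (p := p) (i : ℕ) n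
      omega
    rw [h1]
    exact sum_pow_card_sub_one
  rw [Finset.prod_congr rfl (fun i _ => heq i), Finset.prod_const] at hzero
  simp only [Finset.card_univ, Fintype.card_fin] at hzero
  have : ((-1 : ZMod p)) ^ (n+1) ≠ 0 := by
    apply pow_ne_zero
    simp only [ne_eq, neg_eq_zero]
    exact one_ne_zero
  exact this hzero

def shiftGen (p j : ℕ) [Fact p.Prime] (e : ZMod p) (x : ℕ → ZMod p) : ℕ → ZMod p :=
  fun i => if i = j then x i + e * ∏ i' ∈ Finset.range j, x i' ^ (p-1) else x i

lemma shiftGen_prod (j : ℕ) (e : ZMod p) (x : ℕ → ZMod p) :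
    ∏ i' ∈ Finset.range j, (shiftGen p j e x) i' ^ (p-1)
      = ∏ i' ∈ Finset.range j, x i' ^ (p-1) :=
  Finset.prod_congr rfl fun r hr => by
    rw [shiftGen, if_neg (Nat.ne_of_lt (Finset.mem_range.1 hr))]

lemma shiftGen_apply_ne (j : ℕ) (e : ZMod p) (x : ℕ → ZMod p) {i : ℕ} (h : i ≠ j) :
    shiftGen p j e x i = x i := if_neg h

lemma shiftGen_apply_self (j : ℕ) (e : ZMod p) (x : ℕ → ZMod p) :
    shiftGen p j e x j = x j + e * ∏ i' ∈ Finset.range j, x i' ^ (p-1) := if_pos rfl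

lemma shiftGen_comp (j : ℕ) (e d : ZMod p) (x : ℕ → ZMod p) :
    shiftGen p j e (shiftGen p j d x) = shiftGen p j (e + d) x := by
  funext i
  by_cases h : i = j
  · subst h
    rw [shiftGen_apply_self, shiftGen_apply_self, shiftGen_apply_self, shiftGen_prod]
    ring
  · rw [shiftGen_apply_ne _ _ _ h, shiftGen_apply_ne _ _ _ h, shiftGen_apply_ne _ _ _ h]

lemma shiftGen_zero (j : ℕ) (x : ℕ → ZMod p) : shiftGen p j 0 x = x := by
  funext i
  by_cases h : i = j
  · subst h; rw [shiftGen_apply_self]; ring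
  · exact shiftGen_apply_ne _ _ _ h

/-- additive shift in coordinate `j` by the product of earlier coordinates to the `p-1`. -/
def shiftAdd (p j : ℕ) [Fact p.Prime] : (ℕ → ZMod p) → (ℕ → ZMod p) := shiftGen p j 1

def shiftPerm (p j : ℕ) [Fact p.Prime] : Equiv.Perm (ℕ → ZMod p) where
  toFun := shiftGen p j (-1)
  invFun := shiftAdd p j
  left_inv x := by
    show shiftGen p j 1 (shiftGen p j (-1) x) = x
    rw [shiftGen_comp]
    norm_num [shiftGen_zero]
  right_inv x := by
    show shiftGen p j (-1) (shiftGen p j 1 x) = x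
    rw [shiftGen_comp]
    norm_num [shiftGen_zero]

lemma shiftPerm_triangular (j : ℕ) : IsTriangular p (shiftPerm p j) := by
  refine ⟨fun n v => if h : n = j then -(∏ i' : Fin j, v (Fin.cast h.symm i') ^ (p-1)) else 0,
    fun x n => ?_⟩
  by_cases h : n = j
  · subst h
    show shiftGen p n (-1) x n = _
    rw [shiftGen_apply_self]
    simp only [dif_pos rfl, Fin.coe_cast, dite_true]
    rw [← Finset.prod_range (fun i' => x i' ^ (p-1))]
    ring
  · show shiftGen p j (-1) x n = _
    rw [shiftGen_apply_ne _ _ _ h]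
    simp only [dif_neg h, add_zero]

lemma shiftPerm_symm_apply (j : ℕ) (x : ℕ → ZMod p) :
    (shiftPerm p j).symm x = shiftAdd p j x := rfl

/-- the difference operator. -/
def Tmap (p j : ℕ) [Fact p.Prime] :
    ((ℕ → ZMod p) → ZMod p) →ₗ[ZMod p] ((ℕ → ZMod p) → ZMod p) where
  toFun f := (fun x => f (shiftAdd p j x)) - f
  map_add' f g := by funext x; simp [Pi.sub_apply]; ring
  map_smul' c f := by funext x; simp [Pi.sub_apply]; ring

/-- the digit pattern of the monomials appearing in `Tmap p j (kalMonomial p m)`. -/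
def Didx (p j m t : ℕ) : ℕ → ℕ := fun i =>
  if i < j then (if dgt p i m = 0 then p - 1 else dgt p i m)
  else if i = j then t else dgt p i m

lemma Didx_lt {j m t : ℕ} (ht : t < p) (i : ℕ) : Didx p j m t i < p := by
  unfold Didx
  have h1 := dgt_lt (p := p) i m
  have h2 := p_pos (p := p)
  split_ifs <;> omega

/-- Key expansion: the difference operator applied to a monomial. -/
lemma Texp {m s j : ℕ} (hms : m < p ^ s) (hjs : j < s) :
    Tmap p j (kalMonomial p m)
    = ∑ t ∈ Finset.range (dgt p j m),
        (Nat.choose (dgt p j m) t : ZMod p) •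
          kalMonomial p (∑ i ∈ Finset.range s, Didx p j m t i * p ^ i) := by
  funext x
  set u : ZMod p := ∏ i' ∈ Finset.range j, x i' ^ (p-1) with hu
  set dj := dgt p j m with hdj
  set R : ZMod p := ∏ i ∈ Finset.range s \ {j}, x i ^ dgt p i m with hR
  have hjmem : j ∈ Finset.range s := Finset.mem_range.2 hjs
  have hshift : ∀ i ∈ Finset.range s \ {j}, (shiftAdd p j x) i = x i := by
    intro i hi
    have hij : i ≠ j := by
      intro h
      exact (Finset.mem_sdiff.1 hi).2 (Finset.mem_singleton.2 h)
    exact shiftGen_apply_ne _ _ _ hij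
  have hT : Tmap p j (kalMonomial p m) x
      = kalMonomial p m (shiftAdd p j x) - kalMonomial p m x := rfl
  have hL : kalMonomial p m (shiftAdd p j x) - kalMonomial p m x
      = R * ((x j + u) ^ dj - x j ^ dj) := by
    rw [kal_eq_prod hms (shiftAdd p j x), kal_eq_prod hms x,
      Finset.prod_eq_prod_diff_singleton_mul hjmem
        (fun i => (shiftAdd p j x) i ^ dgt p i m),
      Finset.prod_eq_prod_diff_singleton_mul hjmem (fun i => x i ^ dgt p i m)]
    have h1 : ∏ i ∈ Finset.range s \ {j}, (shiftAdd p j x) i ^ dgt p i m = R :=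
      Finset.prod_congr rfl (fun i hi => by rw [hshift i hi])
    have h2 : (shiftAdd p j x) j = x j + u := by
      rw [shiftAdd, shiftGen_apply_self, one_mul]
    rw [h1, h2]
    ring
  have u01 : u = 0 ∨ u = 1 := by
    rw [hu]
    refine Finset.prod_induction _ (fun z => z = 0 ∨ z = 1) ?_ (Or.inr rfl) ?_
    · rintro a b (rfl|rfl) (rfl|rfl) <;> simp
    · intro i _
      by_cases hxi : x i = 0
      · left
        rw [hxi, zero_pow]
        have := hp.out.two_le
        omega
      · right
        exact ZMod.pow_card_sub_one_eq_one hxi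
  have key : (x j + u) ^ dj - x j ^ dj = u * ((x j + 1) ^ dj - x j ^ dj) := by
    rcases u01 with h | h
    · rw [h]; simp
    · rw [h]; ring
  have binom : (x j + 1) ^ dj - x j ^ dj
      = ∑ t ∈ Finset.range dj, x j ^ t * (Nat.choose dj t : ZMod p) := by
    rw [add_pow, Finset.sum_range_succ, Nat.choose_self]
    simp only [one_pow, mul_one, Nat.cast_one, Nat.sub_self, pow_zero]
    rw [add_sub_cancel_right]
  have hfactor : ∀ t, t < p → u * (x j ^ t * R) = ∏ i ∈ Finset.range s, x i ^ Didx p j m t i := by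
    intro t htp
    have e1 : u = ∏ i ∈ Finset.range s, (if i < j then x i ^ (p-1) else 1) := by
      rw [hu]
      calc ∏ i' ∈ Finset.range j, x i' ^ (p-1)
          = ∏ i ∈ Finset.range j, (if i < j then x i ^ (p-1) else 1) :=
            Finset.prod_congr rfl (fun i hi => by rw [if_pos (Finset.mem_range.1 hi)])
        _ = ∏ i ∈ Finset.range s, (if i < j then x i ^ (p-1) else 1) :=
            Finset.prod_subset (Finset.range_subset_range.2 hjs.le)
              (fun i _ hni => if_neg (fun hlt => hni (Finset.mem_range.2 hlt)))
    have e2 : x j ^ t = ∏ i ∈ Finset.range s, (if i = j then x i ^ t else 1) := by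
      rw [Finset.prod_ite_eq' (Finset.range s) j (fun i => x i ^ t), if_pos hjmem]
    have e3 : R = ∏ i ∈ Finset.range s, (if i = j then 1 else x i ^ dgt p i m) := by
      rw [Finset.prod_eq_prod_diff_singleton_mul hjmem
        (fun i => if i = j then 1 else x i ^ dgt p i m), if_pos rfl, mul_one, hR]
      exact Finset.prod_congr rfl (fun i hi => by
        rw [if_neg (fun h => (Finset.mem_sdiff.1 hi).2 (Finset.mem_singleton.2 h))])
    rw [e1, e2, e3, ← Finset.prod_mul_distrib, ← Finset.prod_mul_distrib]
    apply Finset.prod_congr rfl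
    intro i _
    by_cases h1 : i < j
    · have h2 : i ≠ j := Nat.ne_of_lt h1
      rw [if_pos h1, if_neg h2, if_neg h2, one_mul]
      show x i ^ (p-1) * x i ^ dgt p i m = x i ^ Didx p j m t i
      rw [← pow_add, add_comm (p-1) (dgt p i m), pow_reduce]
      unfold Didx
      rw [if_pos h1]
    · by_cases h2 : i = j
      · subst h2
        rw [if_neg h1, if_pos rfl, if_pos rfl, one_mul, mul_one]
        unfold Didx
        rw [if_neg h1, if_pos rfl]
      · rw [if_neg h1, if_neg h2, if_neg h2, one_mul, one_mul]
        unfold Didx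
        rw [if_neg h1, if_neg h2]
  rw [Finset.sum_apply, hT, hL, key, binom, Finset.mul_sum, Finset.mul_sum]
  apply Finset.sum_congr rfl
  intro t ht
  have htp : t < p := lt_trans (Finset.mem_range.1 ht) (dgt_lt j m)
  rw [Pi.smul_apply, ← mono_eq_kal (Didx_lt htp) s x, ← hfactor t htp, smul_eq_mul]
  ring


/-! ## index bounds -/

lemma geom (j : ℕ) : ∑ i ∈ Finset.range j, (p-1) * p^i = p^j - 1 := by
  induction j with
  | zero => simp
  | succ j ih =>
    rw [Finset.sum_range_succ, ih]
    have h1 : 1 ≤ p^j := Nat.one_le_pow _ _ p_pos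
    have h2 : (p-1) * p^j = p * p^j - p^j := by rw [Nat.sub_mul, one_mul]
    have h3 : p^(j+1) = p * p^j := by rw [pow_succ]; ring
    have h4 : p^j ≤ p * p^j := Nat.le_mul_of_pos_left _ p_pos
    omega

lemma sum_split (f : ℕ → ℕ) {j s : ℕ} (hjs : j < s) :
    ∑ i ∈ Finset.range s, f i
      = ((∑ i ∈ Finset.range j, f i) + f j) + ∑ i ∈ Finset.Ico (j+1) s, f i := by
  rw [Finset.range_eq_Ico,
    ← Finset.sum_Ico_consecutive f (Nat.zero_le (j+1)) (by omega : j+1 ≤ s),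
    ← Finset.range_eq_Ico, Finset.sum_range_succ]

lemma Didx_Ico {m s j t : ℕ} :
    ∑ i ∈ Finset.Ico (j+1) s, Didx p j m t i * p^i
      = ∑ i ∈ Finset.Ico (j+1) s, dgt p i m * p^i :=
  Finset.sum_congr rfl fun i hi => by
    have h0 := (Finset.mem_Ico.1 hi).1
    have h1 : ¬ i < j := by omega
    have h2 : i ≠ j := by omega
    unfold Didx; rw [if_neg h1, if_neg h2]

lemma Didx_self {m j t : ℕ} : Didx p j m t j = t := by
  unfold Didx; rw [if_neg (lt_irrefl j), if_pos rfl]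

lemma Didx_head_le {m j t : ℕ} :
    ∑ i ∈ Finset.range j, Didx p j m t i * p^i ≤ p^j - 1 := by
  calc ∑ i ∈ Finset.range j, Didx p j m t i * p^i
      ≤ ∑ i ∈ Finset.range j, (p-1) * p^i := by
        apply Finset.sum_le_sum
        intro i hi
        apply Nat.mul_le_mul_right
        unfold Didx
        rw [if_pos (Finset.mem_range.1 hi)]
        have := dgt_lt (p := p) i m
        have := p_pos (p := p)
        split_ifs <;> omega
    _ = p^j - 1 := geom j

lemma Nt_lt {m s j t : ℕ} (hms : m < p^s) (hjs : j < s) (ht : t < dgt p j m) :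
    ∑ i ∈ Finset.range s, Didx p j m t i * p ^ i < m := by
  have hm := sum_dgt hms
  rw [sum_split (fun i => dgt p i m * p^i) hjs] at hm
  rw [sum_split (fun i => Didx p j m t i * p^i) hjs, Didx_Ico, Didx_self]
  have hS := Didx_head_le (p := p) (m := m) (j := j) (t := t)
  have hq : 1 ≤ p^j := Nat.one_le_pow _ _ p_pos
  have h1 : (t+1) * p^j ≤ dgt p j m * p^j := Nat.mul_le_mul_right _ (by omega)
  have h2 : (t+1) * p^j = t * p^j + p^j := by ring
  omega

lemma Didx_head_eq {n j t : ℕ} (hlow : ∀ i < j, dgt p i n = 0) :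
    ∑ i ∈ Finset.range j, Didx p j n t i * p^i = p^j - 1 := by
  rw [← geom (p := p) j]
  apply Finset.sum_congr rfl
  intro i hi
  have hij := Finset.mem_range.1 hi
  unfold Didx
  rw [if_pos hij, hlow i hij, if_pos rfl]

lemma Nt_top {n s j : ℕ} (hns : n < p^s) (hjs : j < s) (hlow : ∀ i < j, dgt p i n = 0)
    (hdj : dgt p j n ≠ 0) :
    ∑ i ∈ Finset.range s, Didx p j n (dgt p j n - 1) i * p ^ i + 1 = n := by
  have hm := sum_dgt hns
  rw [sum_split (fun i => dgt p i n * p^i) hjs] at hm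
  rw [sum_split (fun i => Didx p j n (dgt p j n - 1) i * p^i) hjs, Didx_Ico, Didx_self,
    Didx_head_eq hlow]
  have hz : ∑ i ∈ Finset.range j, dgt p i n * p^i = 0 :=
    Finset.sum_eq_zero fun i hi => by rw [hlow i (Finset.mem_range.1 hi), zero_mul]
  rw [hz] at hm
  have hq : 1 ≤ p^j := Nat.one_le_pow _ _ p_pos
  have h2 : dgt p j n * p^j = (dgt p j n - 1) * p^j + p^j := by
    have h3 : dgt p j n - 1 + 1 = dgt p j n := Nat.succ_pred_eq_of_pos (Nat.pos_of_ne_zero hdj)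
    calc dgt p j n * p^j = (dgt p j n - 1 + 1) * p^j := by rw [h3]
      _ = (dgt p j n - 1) * p^j + p^j := by ring
  omega

lemma Nt_small {n s j t : ℕ} (hns : n < p^s) (hjs : j < s) (hlow : ∀ i < j, dgt p i n = 0)
    (ht : t + 1 < dgt p j n) :
    ∑ i ∈ Finset.range s, Didx p j n t i * p ^ i + 1 < n := by
  have hm := sum_dgt hns
  rw [sum_split (fun i => dgt p i n * p^i) hjs] at hm
  rw [sum_split (fun i => Didx p j n t i * p^i) hjs, Didx_Ico, Didx_self, Didx_head_eq hlow]
  have hz : ∑ i ∈ Finset.range j, dgt p i n * p^i = 0 :=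
    Finset.sum_eq_zero fun i hi => by rw [hlow i (Finset.mem_range.1 hi), zero_mul]
  rw [hz] at hm
  have hq : 1 ≤ p^j := Nat.one_le_pow _ _ p_pos
  have h1 : (t+2) * p^j ≤ dgt p j n * p^j := Nat.mul_le_mul_right _ (by omega)
  have h2 : (t+2) * p^j = t * p^j + p^j + p^j := by ring
  omega

/-! ## descent -/

lemma Tmap_Ult_le {j s n r : ℕ} (hjs : j < s) (hsn : ∀ m, m < n → m < p ^ s)
    (hr : ∀ m, m < n → ∀ t, t < dgt p j m →
      (∑ i ∈ Finset.range s, Didx p j m t i * p ^ i) < r) :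
    ∀ z ∈ Ult p n, Tmap p j z ∈ Ult p r := by
  intro z hz
  have h1 : Tmap p j z ∈ Submodule.span (ZMod p) (Tmap p j '' (kalMonomial p '' {m : ℕ | m < n})) :=
    Submodule.apply_mem_span_image_of_mem_span _ hz
  refine Submodule.span_le.2 ?_ h1
  rintro f ⟨g, ⟨m, hm, rfl⟩, rfl⟩
  have hmn : m < n := hm
  rw [Texp (hsn m hmn) hjs]
  apply Submodule.sum_mem
  intro t ht
  apply Submodule.smul_mem
  exact kal_mem_Ult (hr m hmn t (Finset.mem_range.1 ht))

lemma descend (V : Submodule (ZMod p) ((ℕ → ZMod p) → ZMod p))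
    (hV : ∀ j f, f ∈ V → Tmap p j f ∈ V) (n : ℕ)
    (h : ∃ f, f ∈ V ∧ f ∈ Ult p (n+2) ∧ f ∉ Ult p (n+1)) :
    ∃ h', h' ∈ V ∧ h' ∈ Ult p (n+1) ∧ h' ∉ Ult p n := by
  classical
  obtain ⟨f, hfV, hf1, hf2⟩ := h
  set N := n + 1 with hNdef
  have hex : ∃ j, dgt p j N ≠ 0 := by
    by_contra hc
    push_neg at hc
    have hsum := sum_dgt (lt_pow_self' (p := p) N)
    rw [Finset.sum_eq_zero (fun i _ => by rw [hc i, zero_mul])] at hsum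
    omega
  set j := Nat.find hex with hjdef
  have hjne : dgt p j N ≠ 0 := Nat.find_spec hex
  have hlow : ∀ i < j, dgt p i N = 0 := fun i hi => by
    have := Nat.find_min hex hi
    simpa using this
  set s := N + 1 with hsdef
  have hNs : N < p ^ s :=
    lt_of_lt_of_le (lt_pow_self' N) (Nat.pow_le_pow_right p_pos (Nat.le_succ N))
  have hpjN : p ^ j ≤ N := by
    by_contra hc
    push_neg at hc
    exact hjne (dgt_eq_zero_of_lt hc)
  have hjs : j < s := by
    have := lt_pow_self' (p := p) j
    omega
  obtain ⟨c, z, hz, hfe⟩ := mem_Ult_succ_iff.1 hf1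
  have hc0 : c ≠ 0 := by
    rintro rfl
    rw [zero_smul, zero_add] at hfe
    exact hf2 (hfe ▸ hz)
  have hdjF : ((dgt p j N : ZMod p)) ≠ 0 := by
    rw [Ne, ZMod.natCast_eq_zero_iff]
    intro hdvd
    have h1 := dgt_lt (p := p) j N
    have h2 := Nat.le_of_dvd (Nat.pos_of_ne_zero hjne) hdvd
    omega
  have hTz : Tmap p j z ∈ Ult p n := by
    refine Tmap_Ult_le hjs (fun m hm => ?_) (fun m hm t ht => ?_) z hz
    · calc m < N := hm
        _ < p ^ s := hNs
    · have h1 := Nt_lt (lt_trans hm hNs) hjs ht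
      omega
  have hTN : Tmap p j (kalMonomial p N) - (dgt p j N : ZMod p) • kalMonomial p n ∈ Ult p n := by
    rw [Texp hNs hjs]
    have hdjpos : 0 < dgt p j N := Nat.pos_of_ne_zero hjne
    have hsum_eq : ∑ i ∈ Finset.range s, Didx p j N (dgt p j N - 1) i * p ^ i = n := by
      have := Nt_top hNs hjs hlow hjne
      omega
    have hsplit : Finset.range (dgt p j N) = Finset.range ((dgt p j N - 1) + 1) := by
      congr 1
      omega
    rw [hsplit, Finset.sum_range_succ, hsum_eq]
    have hch : (Nat.choose (dgt p j N) (dgt p j N - 1) : ZMod p) = (dgt p j N : ZMod p) := by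
      congr 1
      obtain ⟨d, hd⟩ : ∃ d, dgt p j N = d + 1 := ⟨dgt p j N - 1, by omega⟩
      rw [hd]
      simp [Nat.choose_succ_self_right]
    have hch2 : ∀ t, (Nat.choose (dgt p j N) t : ZMod p) • kalMonomial p (∑ i ∈ Finset.range s, Didx p j N t i * p ^ i) = (fun t => (Nat.choose (dgt p j N) t : ZMod p) • kalMonomial p (∑ i ∈ Finset.range s, Didx p j N t i * p ^ i)) t := fun _ => rfl
    rw [hch, add_sub_cancel_right]
    apply Submodule.sum_mem
    intro t ht
    apply Submodule.smul_mem
    apply kal_mem_Ult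
    have h4 := Nt_small hNs hjs hlow (show t + 1 < dgt p j N by
      have := Finset.mem_range.1 ht; omega)
    omega
  refine ⟨Tmap p j f, hV j f hfV, ?_, ?_⟩
  · have hfT : Tmap p j f = c • Tmap p j (kalMonomial p N) + Tmap p j z := by
      rw [hfe, map_add, map_smul]
    rw [hfT]
    apply Submodule.add_mem
    · have : c • Tmap p j (kalMonomial p N)
          = c • (Tmap p j (kalMonomial p N) - (dgt p j N : ZMod p) • kalMonomial p n)
            + (c * (dgt p j N : ZMod p)) • kalMonomial p n := by
        rw [smul_sub, ← smul_smul]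
        abel
      rw [this]
      apply Submodule.add_mem
      · exact Submodule.smul_mem _ _ (Ult_mono (Nat.le_succ n) hTN)
      · exact Submodule.smul_mem _ _ (kal_mem_Ult (Nat.lt_succ_self n))
    · exact Ult_mono (Nat.le_succ n) hTz
  · intro hmem
    apply kal_not_mem_Ult (p := p) n
    have hcd : c * (dgt p j N : ZMod p) ≠ 0 := mul_ne_zero hc0 hdjF
    have hw : Tmap p j f - (c * (dgt p j N : ZMod p)) • kalMonomial p n ∈ Ult p n := by
      have hfT : Tmap p j f = c • Tmap p j (kalMonomial p N) + Tmap p j z := by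
        rw [hfe, map_add, map_smul]
      have heq : Tmap p j f - (c * (dgt p j N : ZMod p)) • kalMonomial p n
          = c • (Tmap p j (kalMonomial p N) - (dgt p j N : ZMod p) • kalMonomial p n)
            + Tmap p j z := by
        rw [hfT, smul_sub, ← smul_smul]
        abel
      rw [heq]
      exact Submodule.add_mem _ (Submodule.smul_mem _ _ hTN) hTz
    have hrepr : kalMonomial p n = (c * (dgt p j N : ZMod p))⁻¹
        • (Tmap p j f - (Tmap p j f - (c * (dgt p j N : ZMod p)) • kalMonomial p n)) := by
      rw [sub_sub_cancel, smul_smul, inv_mul_cancel₀ hcd, one_smul]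
    rw [hrepr]
    exact Submodule.smul_mem _ _ (Submodule.sub_mem _ hmem hw)

lemma climb (V : Submodule (ZMod p) ((ℕ → ZMod p) → ZMod p))
    (hV : ∀ j f, f ∈ V → Tmap p j f ∈ V) :
    ∀ n, (∃ f, f ∈ V ∧ f ∈ Ult p (n+1) ∧ f ∉ Ult p n) → Ult p (n+1) ≤ V := by
  intro n
  induction n with
  | zero =>
    rintro ⟨f, hfV, hf1, hf2⟩
    obtain ⟨c, z, hz, hfe⟩ := mem_Ult_succ_iff.1 hf1
    rw [Ult_zero, Submodule.mem_bot] at hz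
    have hc0 : c ≠ 0 := by
      rintro rfl
      rw [zero_smul, zero_add, hz] at hfe
      exact hf2 (by rw [hfe, Ult_zero]; exact Submodule.mem_bot _ |>.2 rfl)
    have hkal : kalMonomial p 0 ∈ V := by
      have he : kalMonomial p 0 = c⁻¹ • f := by
        rw [hfe, hz, add_zero, smul_smul, inv_mul_cancel₀ hc0, one_smul]
      rw [he]
      exact Submodule.smul_mem _ _ hfV
    apply Submodule.span_le.2
    rintro g ⟨m, hm, rfl⟩
    have hm0 : m = 0 := by simpa using hm
    rw [hm0]
    exact hkal
  | succ n ih =>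
    rintro ⟨f, hfV, hf1, hf2⟩
    have hprev : Ult p (n+1) ≤ V := ih (descend V hV n ⟨f, hfV, hf1, hf2⟩)
    obtain ⟨c, z, hz, hfe⟩ := mem_Ult_succ_iff.1 hf1
    have hc0 : c ≠ 0 := by
      rintro rfl
      rw [zero_smul, zero_add] at hfe
      exact hf2 (hfe ▸ hz)
    have hkal : kalMonomial p (n+1) ∈ V := by
      have he : kalMonomial p (n+1) = c⁻¹ • (f - z) := by
        rw [hfe, add_sub_cancel_right, smul_smul, inv_mul_cancel₀ hc0, one_smul]
      rw [he]
      exact Submodule.smul_mem _ _ (Submodule.sub_mem _ hfV (hprev hz))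
    apply Submodule.span_le.2
    rintro g ⟨m, hm, rfl⟩
    have hm' : m < n + 2 := hm
    by_cases hmn : m = n + 1
    · rw [hmn]
      exact hkal
    · exact hprev (kal_mem_Ult (show m < n + 1 by omega))

lemma exists_top {f : (ℕ → ZMod p) → ZMod p} (hfW : f ∈ Wspan p) (hf0 : f ≠ 0) :
    ∃ n, f ∈ Ult p (n+1) ∧ f ∉ Ult p n := by
  classical
  obtain ⟨Nf, hNf⟩ := mem_Wspan hfW
  have hex : ∃ k, f ∈ Ult p k := ⟨Nf, hNf⟩
  have hk := Nat.find_spec hex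
  have hk0 : Nat.find hex ≠ 0 := by
    intro h
    rw [h, Ult_zero, Submodule.mem_bot] at hk
    exact hf0 hk
  refine ⟨Nat.find hex - 1, ?_, ?_⟩
  · have h1 : Nat.find hex - 1 + 1 = Nat.find hex := by omega
    rw [h1]
    exact hk
  · exact Nat.find_min hex (show Nat.find hex - 1 < Nat.find hex by omega)

end KpAux

/-- if `V ⊆ W` is a `ZMod p`-linear subspace invariant under `f ↦ f ∘ g⁻¹`
for every `g ∈ K_p`, then `V = {0}`, or `V = W`, or `V = U_n` for some `n`. -/
theorem Kp_submodule_classification (p : ℕ) (hp : p.Prime)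
    (V : Submodule (ZMod p) ((ℕ → ZMod p) → ZMod p))
    (hVW : V ≤ Wspan p)
    (hinv : ∀ g : Equiv.Perm (ℕ → ZMod p), IsTriangular p g →
      ∀ f ∈ V, (fun x => f (g.symm x)) ∈ V) :
    V = ⊥ ∨ V = Wspan p ∨ ∃ n : ℕ, V = Uspan p n := by
  haveI : Fact p.Prime := ⟨hp⟩
  classical
  by_cases hbot : V = ⊥
  · exact Or.inl hbot
  right
  have hV : ∀ j f, f ∈ V → KpAux.Tmap p j f ∈ V := by
    intro j f hf
    have h1 := hinv (KpAux.shiftPerm p j) (KpAux.shiftPerm_triangular j) f hf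
    have h2 : KpAux.Tmap p j f = (fun x => f ((KpAux.shiftPerm p j).symm x)) - f := rfl
    rw [h2]
    exact Submodule.sub_mem _ h1 hf
  set P : ℕ → Prop := fun n => ∃ f, f ∈ V ∧ f ∈ KpAux.Ult p (n+1) ∧ f ∉ KpAux.Ult p n with hP
  have hPdown : ∀ k m, P (m + k) → P m := by
    intro k
    induction k with
    | zero => intro m h; exact h
    | succ k ih =>
      intro m h
      exact ih m (KpAux.descend V hV (m + k) h)
  obtain ⟨f0, hf0V, hf0ne⟩ := Submodule.ne_bot_iff V |>.1 hbot
  obtain ⟨n0, hn01, hn02⟩ := KpAux.exists_top (hVW hf0V) hf0ne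
  have hPn0 : P n0 := ⟨f0, hf0V, hn01, hn02⟩
  by_cases hbd : ∃ N, ∀ n, P n → n ≤ N
  · right
    obtain ⟨N, hN⟩ := hbd
    set N0 := Nat.findGreatest P N with hN0def
    have hPN0 : P N0 := Nat.findGreatest_spec (hN n0 hPn0) hPn0
    refine ⟨N0, ?_⟩
    rw [KpAux.Uspan_eq_Ult]
    apply le_antisymm
    · intro f hf
      by_cases hf0 : f = 0
      · rw [hf0]
        exact Submodule.zero_mem _
      · obtain ⟨n, hn1, hn2⟩ := KpAux.exists_top (hVW hf) hf0
        have hPn : P n := ⟨f, hf, hn1, hn2⟩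
        have hnN0 : n ≤ N0 := Nat.le_findGreatest (hN n hPn) hPn
        exact KpAux.Ult_mono (by omega) hn1
    · exact KpAux.climb V hV N0 hPN0
  · left
    push_neg at hbd
    apply le_antisymm hVW
    apply Submodule.span_le.2
    rintro g ⟨m, rfl⟩
    obtain ⟨n, hPn, hmn⟩ := hbd m
    have hPm : P m := by
      have hle : m ≤ n := le_of_lt hmn
      have h1 : m + (n - m) = n := by omega
      exact hPdown (n - m) m (by rw [h1]; exact hPn)
    exact KpAux.climb V hV m hPm (KpAux.kal_mem_Ult (Nat.lt_succ_self m))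
end

section
/- Let p be a prime and G a subgroup of K_p. Say that the action of G is uniserial if for every n ≥ 0 the ZMod p-linear span of the set ⋃_{g ∈ G} {f ∘ g⁻¹ − f : f ∈ U_{n+1}} equals U_n. Then the action of G is uniserial if and only if for every k ≥ 0 there exists g ∈ G with α_k(g) ≠ 0, i.e., every homomorphism α_k : G → ZMod p is nonzero. -/
/-- Extend a word `v ∈ (ZMod p)^n` to an infinite sequence by zeros. -/
def extendWord {p : ℕ} (n : ℕ) (v : Fin n → ZMod p) : ℕ → ZMod p :=
  fun i => if h : i < n then v ⟨i, h⟩ else 0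

/-- `α_n(g) = Σ_{v ∈ (ZMod p)^n} a_n(v)`, computed from the action of `g`
(for triangular `g`, `a_n(v) = (g x̂)_n − x̂_n` for any extension `x̂` of `v`). -/
noncomputable def alphaKal (p : ℕ) [NeZero p] (g : Equiv.Perm (ℕ → ZMod p)) (n : ℕ) :
    ZMod p :=
  ∑ v : Fin n → ZMod p, (g (extendWord n v) n - extendWord n v n)

/-! ### digits -/

def dig (p m i : ℕ) : ℕ := m / p ^ i % p

lemma dig_lt {p : ℕ} (hp : 2 ≤ p) (m i : ℕ) : dig p m i < p := Nat.mod_lt _ (by omega)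

lemma dig_le {p : ℕ} (hp : 2 ≤ p) (m i : ℕ) : dig p m i ≤ p - 1 := by
  have := dig_lt hp m i; omega

lemma dig_eq_zero_of_lt {p m i : ℕ} (h : m < p ^ i) : dig p m i = 0 := by
  unfold dig; rw [Nat.div_eq_of_lt h]; rfl


lemma dig_div {p : ℕ} (X t : ℕ) : dig p X (t + 1) = dig p (X / p) t := by
  unfold dig; rw [Nat.div_div_eq_div_mul, ← pow_succ']

/-- comparing numbers via the most significant differing digit -/
lemma dig_exists_of_lt {p : ℕ} (hp : 2 ≤ p) :
    ∀ B A : ℕ, A < B → ∃ i, dig p A i < dig p B i ∧ ∀ t, i < t → dig p A t = dig p B t := by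
  intro B
  induction B using Nat.strong_induction_on with
  | _ B IH =>
    intro A hAB
    have hB : 0 < B := by omega
    by_cases h : A / p = B / p
    · refine ⟨0, ?_, ?_⟩
      · have hA' := Nat.div_add_mod A p
        have hB' := Nat.div_add_mod B p
        rw [h] at hA'
        have h1 : A % p < p := Nat.mod_lt _ (by omega)
        have h2 : B % p < p := Nat.mod_lt _ (by omega)
        simp only [dig, pow_zero, Nat.div_one]
        omega
      · intro t ht
        obtain ⟨s, rfl⟩ : ∃ s, t = s + 1 := ⟨t - 1, by omega⟩
        rw [dig_div, dig_div, h]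
    · have hlt : A / p < B / p := lt_of_le_of_ne (Nat.div_le_div_right (le_of_lt hAB)) h
      have hBp : B / p < B := Nat.div_lt_self hB (by omega)
      obtain ⟨i, hi1, hi2⟩ := IH (B / p) hBp (A / p) hlt
      refine ⟨i + 1, ?_, ?_⟩
      · rw [dig_div, dig_div]; exact hi1
      · intro t ht
        obtain ⟨s, rfl⟩ : ∃ s, t = s + 1 := ⟨t - 1, by omega⟩
        rw [dig_div, dig_div]
        exact hi2 _ (by omega)

/-! ### kalMonomial as a product over any sufficiently long range -/

lemma prod_dig_ext {p : ℕ} (hp : 2 ≤ p) {m M L : ℕ} (hm : m < p ^ M) (hML : M ≤ L) (x : ℕ → ZMod p) :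
    ∏ i ∈ Finset.range L, x i ^ dig p m i = ∏ i ∈ Finset.range M, x i ^ dig p m i := by
  apply (Finset.prod_subset (Finset.range_subset_range.2 hML) _).symm
  intro i hi hni
  simp only [Finset.mem_range] at hi hni
  have : m < p ^ i := lt_of_lt_of_le hm (Nat.pow_le_pow_right (by omega) (by omega))
  rw [dig_eq_zero_of_lt this, pow_zero]

lemma kal_eq_prod {p : ℕ} (hp : 2 ≤ p) {m N : ℕ} (hm : m < p ^ N) (x : ℕ → ZMod p) :
    kalMonomial p m x = ∏ i ∈ Finset.range N, x i ^ dig p m i := by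
  have hm1 : m < p ^ (m + 1) :=
    lt_of_lt_of_le (Nat.lt_pow_self (n := m) (by omega)) (Nat.pow_le_pow_right (by omega) (by omega))
  have h1 : kalMonomial p m x = ∏ i ∈ Finset.range (m+1), x i ^ dig p m i := rfl
  rw [h1, ← prod_dig_ext hp hm1 (le_max_left (m+1) N) x, prod_dig_ext hp hm (le_max_right (m+1) N) x]

/-! ### power sums over ZMod p -/

noncomputable def powSum (p : ℕ) [NeZero p] (e : ℕ) : ZMod p := ∑ t : ZMod p, t ^ e

lemma powSum_lt (p : ℕ) [NeZero p] (hp : p.Prime) {e : ℕ} (he : e < p - 1) : powSum p e = 0 := by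
  haveI := Fact.mk hp
  have := FiniteField.sum_pow_lt_card_sub_one (K := ZMod p) e (by rwa [ZMod.card])
  exact this

lemma powSum_top (p : ℕ) [NeZero p] (hp : p.Prime) : powSum p (p - 1) = -1 := by
  haveI := Fact.mk hp
  unfold powSum
  rw [Finset.sum_eq_sum_sdiff_singleton_add (Finset.mem_univ (0 : ZMod p))]
  have h0 : (0 : ZMod p) ^ (p - 1) = 0 := by
    apply zero_pow; have := hp.two_le; omega
  rw [h0, add_zero]
  have : ∀ t ∈ Finset.univ \ {(0 : ZMod p)}, t ^ (p-1) = 1 := by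
    intro t ht
    simp only [Finset.mem_sdiff, Finset.mem_singleton] at ht
    exact ZMod.pow_card_sub_one_eq_one ht.2
  rw [Finset.sum_congr rfl this, Finset.sum_const, Finset.card_sdiff_of_subset (by simp), nsmul_eq_mul,
    mul_one]
  simp only [Finset.card_univ, ZMod.card, Finset.card_singleton]
  have h2 := hp.two_le
  have : ((p - 1 : ℕ) : ZMod p) = (p : ZMod p) - 1 := by
    have : (p - 1) + 1 = p := by omega
    calc ((p-1:ℕ) : ZMod p) = ((p-1:ℕ) : ZMod p) + 1 - 1 := by ring
    _ = (((p-1)+1 : ℕ) : ZMod p) - 1 := by push_cast; ring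
    _ = (p : ZMod p) - 1 := by rw [this]
  rw [this, ZMod.natCast_self, zero_sub]

lemma powSum_reduce (p : ℕ) [NeZero p] (hp : p.Prime) {e : ℕ} (he : p ≤ e) :
    powSum p e = powSum p (e - (p - 1)) := by
  haveI := Fact.mk hp
  have h2 := hp.two_le
  unfold powSum
  apply Finset.sum_congr rfl
  intro t _
  by_cases ht : t = 0
  · subst ht
    rw [zero_pow (by omega), zero_pow (by omega)]
  · have : t ^ e = t ^ (e - (p-1)) * t ^ (p - 1) := by
      rw [← pow_add]; congr 1; omega
    rw [this, ZMod.pow_card_sub_one_eq_one ht, mul_one]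

lemma powSum_mid (p : ℕ) [NeZero p] (hp : p.Prime) {e : ℕ} (h1 : e < 2 * (p - 1)) (h2 : e ≠ p - 1) :
    powSum p e = 0 := by
  have hp2 := hp.two_le
  by_cases h : e < p - 1
  · exact powSum_lt p hp h
  · rw [powSum_reduce p hp (by omega)]
    exact powSum_lt p hp (by omega)

/-! ### the one-variable sums `S(K, L, c)` -/

noncomputable def Ssum (p : ℕ) [NeZero p] (K L : ℕ) (c : ZMod p) : ZMod p :=
  ∑ t : ZMod p, (t + c) ^ K * t ^ L

lemma Ssum_expand (p : ℕ) [NeZero p] (K L : ℕ) (c : ZMod p) :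
    Ssum p K L c = ∑ s ∈ Finset.range (K + 1),
      c ^ (K - s) * (K.choose s : ZMod p) * powSum p (s + L) := by
  unfold Ssum powSum
  have : ∀ t : ZMod p, (t + c) ^ K * t ^ L =
      ∑ s ∈ Finset.range (K+1), c ^ (K - s) * (K.choose s : ZMod p) * (t ^ (s + L)) := by
    intro t
    rw [add_pow, Finset.sum_mul]
    apply Finset.sum_congr rfl
    intro s _
    rw [pow_add]
    ring
  rw [Finset.sum_congr rfl (fun t _ => this t), Finset.sum_comm]
  apply Finset.sum_congr rfl
  intro s _
  rw [← Finset.mul_sum]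

lemma Ssum_diag (p : ℕ) [NeZero p] (hp : p.Prime) {K : ℕ} (hK : K ≤ p - 1) (c : ZMod p) :
    Ssum p K (p - 1 - K) c = -1 := by
  rw [Ssum_expand]
  have hlast : ∀ s ∈ Finset.range (K + 1), s ≠ K →
      c ^ (K - s) * (K.choose s : ZMod p) * powSum p (s + (p - 1 - K)) = 0 := by
    intro s hs hne
    simp only [Finset.mem_range] at hs
    rw [powSum_lt p hp (by omega), mul_zero]
  rw [Finset.sum_eq_single_of_mem K (Finset.self_mem_range_succ K) (fun s hs h => hlast s hs h)]
  have : K + (p - 1 - K) = p - 1 := by omega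
  rw [this, powSum_top p hp, Nat.sub_self, pow_zero, Nat.choose_self, Nat.cast_one]
  ring

lemma Ssum_low (p : ℕ) [NeZero p] (hp : p.Prime) {K L : ℕ} (h : K + L < p - 1) (c : ZMod p) :
    Ssum p K L c = 0 := by
  rw [Ssum_expand]
  apply Finset.sum_eq_zero
  intro s hs
  simp only [Finset.mem_range] at hs
  rw [powSum_lt p hp (by omega), mul_zero]

lemma Ssum_lead (p : ℕ) [NeZero p] (hp : p.Prime) {K : ℕ} (hK1 : 1 ≤ K) (hK : K ≤ p - 1)
    (c : ZMod p) :
    Ssum p K (p - K) c - Ssum p K (p - K) 0 = -(K : ZMod p) * c := by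
  have h2 := hp.two_le
  rw [Ssum_expand, Ssum_expand]
  have hz : ∀ s ∈ Finset.range (K + 1),
      (0 : ZMod p) ^ (K - s) * (K.choose s : ZMod p) * powSum p (s + (p - K)) =
      (if s = K then powSum p p else 0) := by
    intro s hs
    simp only [Finset.mem_range] at hs
    by_cases h : s = K
    · subst h
      simp only [Nat.sub_self, pow_zero, Nat.choose_self, Nat.cast_one, if_true]
      rw [one_mul, one_mul]
      congr 1
      omega
    · rw [if_neg h, zero_pow (by omega), zero_mul, zero_mul]
  rw [Finset.sum_congr rfl hz, Finset.sum_ite_eq' (Finset.range (K+1)) K,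
    if_pos (Finset.self_mem_range_succ K)]
  have hsplit : ∑ s ∈ Finset.range (K + 1),
      c ^ (K - s) * (K.choose s : ZMod p) * powSum p (s + (p - K)) =
      (∑ s ∈ Finset.range K, c ^ (K - s) * (K.choose s : ZMod p) * powSum p (s + (p - K)))
        + powSum p p := by
    rw [Finset.sum_range_succ]
    congr 1
    rw [Nat.sub_self, pow_zero, Nat.choose_self, Nat.cast_one, one_mul, one_mul]
    congr 1
    omega
  rw [hsplit]
  have hmost : ∀ s ∈ Finset.range K, s ≠ K - 1 →
      c ^ (K - s) * (K.choose s : ZMod p) * powSum p (s + (p - K)) = 0 := by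
    intro s hs hne
    simp only [Finset.mem_range] at hs
    rw [powSum_lt p hp (by omega), mul_zero]
  by_cases hK0 : K = 0
  · omega
  · rw [Finset.sum_eq_single_of_mem (K-1) (Finset.mem_range.2 (by omega)) hmost]
    have e1 : K - (K - 1) = 1 := by omega
    have e2 : (K - 1) + (p - K) = p - 1 := by omega
    have e3 : K.choose (K - 1) = K := by
      rw [← Nat.choose_symm (by omega : K - 1 ≤ K)]
      have : K - (K - 1) = 1 := by omega
      rw [this, Nat.choose_one_right]
    rw [e1, e2, e3, powSum_top p hp, pow_one]
    ring

/-! ### triangular sums -/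

noncomputable def triSum (p : ℕ) [NeZero p] (N : ℕ) (K L : ℕ → ℕ)
    (b : (n : ℕ) → (Fin n → ZMod p) → ZMod p) : ZMod p :=
  ∑ v : Fin N → ZMod p, ∏ i ∈ Finset.range N,
    ((extendWord N v i + b i (fun j : Fin i => extendWord N v (j : ℕ))) ^ K i
      * extendWord N v i ^ L i)

lemma extendWord_lt {p N : ℕ} (v : Fin N → ZMod p) {i : ℕ} (h : i < N) :
    extendWord N v i = v ⟨i, h⟩ := dif_pos h

lemma snoc_extend {p N : ℕ} (u : Fin N → ZMod p) (t : ZMod p) {i : ℕ} (h : i < N) :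
    extendWord (N + 1) (Fin.snoc u t) i = extendWord N u i := by
  rw [extendWord_lt _ (by omega : i < N + 1), extendWord_lt _ h]
  exact Fin.snoc_castSucc (α := fun _ : Fin (N+1) => ZMod p) (x := t) (p := u) (i := ⟨i, h⟩)

lemma snoc_extend_last {p N : ℕ} (u : Fin N → ZMod p) (t : ZMod p) :
    extendWord (N + 1) (Fin.snoc u t) N = t := by
  rw [extendWord_lt _ (by omega : N < N + 1)]
  exact Fin.snoc_last (α := fun _ : Fin (N+1) => ZMod p) (x := t) (p := u)

lemma triSum_zero (p : ℕ) [NeZero p] (K L : ℕ → ℕ) (b : (n : ℕ) → (Fin n → ZMod p) → ZMod p) :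
    triSum p 0 K L b = 1 := by
  unfold triSum
  rw [Fintype.sum_unique]
  simp

lemma triSum_peel (p : ℕ) [NeZero p] (N : ℕ) (K L : ℕ → ℕ)
    (b : (n : ℕ) → (Fin n → ZMod p) → ZMod p) :
    triSum p (N + 1) K L b =
      ∑ u : Fin N → ZMod p,
        (∏ i ∈ Finset.range N,
          ((extendWord N u i + b i (fun j : Fin i => extendWord N u (j : ℕ))) ^ K i
            * extendWord N u i ^ L i)) * Ssum p (K N) (L N) (b N u) := by
  unfold triSum Ssum
  rw [← (Fin.snocEquiv (fun _ : Fin (N+1) => ZMod p)).sum_comp]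
  rw [Fintype.sum_prod_type_right]
  apply Finset.sum_congr rfl
  intro u _
  rw [Finset.mul_sum]
  apply Finset.sum_congr rfl
  intro t _
  have hv : Fin.snocEquiv (fun _ : Fin (N+1) => ZMod p) (t, u) = Fin.snoc u t := rfl
  rw [hv, Finset.prod_range_succ]
  have hpre : ∀ i : ℕ, i ≤ N →
      (fun j : Fin i => extendWord (N+1) (Fin.snoc u t) (j : ℕ)) =
      (fun j : Fin i => extendWord N u (j : ℕ)) := by
    intro i hi
    funext j
    exact snoc_extend u t (by omega)
  have hmain : (∏ i ∈ Finset.range N,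
      ((extendWord (N+1) (Fin.snoc u t) i +
          b i (fun j : Fin i => extendWord (N+1) (Fin.snoc u t) (j : ℕ))) ^ K i
        * extendWord (N+1) (Fin.snoc u t) i ^ L i)) =
      ∏ i ∈ Finset.range N,
        ((extendWord N u i + b i (fun j : Fin i => extendWord N u (j : ℕ))) ^ K i
          * extendWord N u i ^ L i) := by
    apply Finset.prod_congr rfl
    intro i hi
    simp only [Finset.mem_range] at hi
    rw [snoc_extend u t hi, hpre i (by omega)]
  rw [hmain, snoc_extend_last u t, hpre N le_rfl]
  have hbu : (fun j : Fin N => extendWord N u (j : ℕ)) = u := by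
    funext j
    rw [extendWord_lt _ j.isLt]
  rw [hbu]

lemma triSum_peel_diag (p : ℕ) [NeZero p] (hp : p.Prime) (N : ℕ) (K L : ℕ → ℕ)
    (b : (n : ℕ) → (Fin n → ZMod p) → ZMod p) (hK : K N ≤ p - 1) (hL : L N = p - 1 - K N) :
    triSum p (N + 1) K L b = triSum p N K L b * (-1) := by
  rw [triSum_peel]
  have hterm : ∀ u ∈ (Finset.univ : Finset (Fin N → ZMod p)),
      (∏ i ∈ Finset.range N,
        ((extendWord N u i + b i (fun j : Fin i => extendWord N u (j : ℕ))) ^ K i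
          * extendWord N u i ^ L i)) * Ssum p (K N) (L N) (b N u) =
      (∏ i ∈ Finset.range N,
        ((extendWord N u i + b i (fun j : Fin i => extendWord N u (j : ℕ))) ^ K i
          * extendWord N u i ^ L i)) * (-1) := by
    intro u _
    rw [hL, Ssum_diag p hp hK]
  rw [Finset.sum_congr rfl hterm, ← Finset.sum_mul]
  rfl

lemma triSum_peel_one (p : ℕ) [NeZero p] (j : ℕ) (K L : ℕ → ℕ)
    (b : (n : ℕ) → (Fin n → ZMod p) → ZMod p) (hlow : ∀ i < j, K i = 0 ∧ L i = 0) :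
    triSum p (j + 1) K L b = ∑ u : Fin j → ZMod p, Ssum p (K j) (L j) (b j u) := by
  rw [triSum_peel]
  apply Finset.sum_congr rfl
  intro u _
  have hone : (∏ i ∈ Finset.range j,
      ((extendWord j u i + b i (fun j' : Fin i => extendWord j u (j' : ℕ))) ^ K i
        * extendWord j u i ^ L i)) = 1 := by
    apply Finset.prod_eq_one
    intro i hi
    simp only [Finset.mem_range] at hi
    rw [(hlow i hi).1, (hlow i hi).2, pow_zero, pow_zero, mul_one]
  rw [hone, one_mul]

lemma triSum_diag (p : ℕ) [NeZero p] (hp : p.Prime) (N : ℕ) (K L : ℕ → ℕ)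
    (b : (n : ℕ) → (Fin n → ZMod p) → ZMod p)
    (h : ∀ i < N, K i ≤ p - 1 ∧ L i = p - 1 - K i) :
    triSum p N K L b = (-1) ^ N := by
  induction N with
  | zero => rw [triSum_zero, pow_zero]
  | succ N IH =>
    rw [triSum_peel_diag p hp N K L b (h N (by omega)).1 (h N (by omega)).2,
      IH (fun i hi => h i (by omega)), pow_succ]

lemma triSum_low (p : ℕ) [NeZero p] (hp : p.Prime) (N : ℕ) (K L : ℕ → ℕ)
    (b : (n : ℕ) → (Fin n → ZMod p) → ZMod p) (i₀ : ℕ) (hi₀ : i₀ < N)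
    (h0 : K i₀ + L i₀ < p - 1)
    (h : ∀ i, i₀ < i → i < N → K i ≤ p - 1 ∧ L i = p - 1 - K i) :
    triSum p N K L b = 0 := by
  induction N with
  | zero => omega
  | succ N IH =>
    by_cases hcase : i₀ = N
    · rw [triSum_peel]
      apply Finset.sum_eq_zero
      intro u _
      subst hcase
      rw [Ssum_low p hp h0, mul_zero]
    · rw [triSum_peel_diag p hp N K L b (h N (by omega) (by omega)).1
        (h N (by omega) (by omega)).2,
        IH (by omega) (fun i hi hi' => h i hi (by omega)), zero_mul]

lemma triSum_lead (p : ℕ) [NeZero p] (hp : p.Prime) (N : ℕ) (K L : ℕ → ℕ)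
    (b : (n : ℕ) → (Fin n → ZMod p) → ZMod p) (j : ℕ) (hj : j < N)
    (hKj1 : 1 ≤ K j) (hKj : K j ≤ p - 1) (hLj : L j = p - K j)
    (hlow : ∀ i < j, K i = 0 ∧ L i = 0)
    (hhigh : ∀ i, j < i → i < N → K i ≤ p - 1 ∧ L i = p - 1 - K i) :
    triSum p N K L b - triSum p N K L (fun _ _ => 0) =
      (-1) ^ (N - 1 - j) * (-(K j : ZMod p)) * ∑ u : Fin j → ZMod p, b j u := by
  induction N with
  | zero => omega
  | succ N IH =>
    by_cases hcase : j = N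
    · subst hcase
      rw [triSum_peel_one p j K L b hlow, triSum_peel_one p j K L (fun _ _ => 0) hlow,
        ← Finset.sum_sub_distrib]
      have hterm : ∀ u ∈ (Finset.univ : Finset (Fin j → ZMod p)),
          Ssum p (K j) (L j) (b j u) -
            Ssum p (K j) (L j) ((fun (_ : ℕ) (_ : Fin _ → ZMod p) => (0 : ZMod p)) j u) =
          -(K j : ZMod p) * b j u := by
        intro u _
        rw [hLj]
        exact Ssum_lead p hp hKj1 hKj (b j u)
      rw [Finset.sum_congr rfl hterm]
      rw [Nat.add_sub_cancel, Nat.sub_self, pow_zero, one_mul, ← Finset.mul_sum]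
    · have hjN : j < N := by omega
      rw [triSum_peel_diag p hp N K L b (hhigh N (by omega) (by omega)).1
          (hhigh N (by omega) (by omega)).2,
        triSum_peel_diag p hp N K L (fun _ _ => 0) (hhigh N (by omega) (by omega)).1
          (hhigh N (by omega) (by omega)).2,
        ← sub_mul, IH hjN (fun i hi hi' => hhigh i hi (by omega))]
      have : N + 1 - 1 - j = (N - 1 - j) + 1 := by omega
      rw [this, pow_succ]
      ring

/-! ### the coefficient functionals φ -/

noncomputable def phiFun (p : ℕ) [NeZero p] (m N : ℕ) :
    ((ℕ → ZMod p) → ZMod p) →ₗ[ZMod p] ZMod p where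
  toFun f := ∑ v : Fin N → ZMod p,
    f (extendWord N v) * ∏ i ∈ Finset.range N, (extendWord N v i) ^ (p - 1 - dig p m i)
  map_add' f g := by
    simp only [Pi.add_apply, add_mul, Finset.sum_add_distrib]
  map_smul' c f := by
    simp only [Pi.smul_apply, smul_eq_mul, RingHom.id_apply, Finset.mul_sum, mul_assoc]

lemma phiFun_apply (p : ℕ) [NeZero p] (m N : ℕ) (f : (ℕ → ZMod p) → ZMod p) :
    phiFun p m N f = ∑ v : Fin N → ZMod p,
      f (extendWord N v) * ∏ i ∈ Finset.range N, (extendWord N v i) ^ (p - 1 - dig p m i) :=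
  rfl

/-- The key correspondence: φ applied to a monomial composed with a triangular permutation
is a triangular sum. -/
lemma phi_comp_triangular (p : ℕ) [NeZero p] (hp : p.Prime) {σ : Equiv.Perm (ℕ → ZMod p)}
    {a : (n : ℕ) → (Fin n → ZMod p) → ZMod p}
    (ha : ∀ (x : ℕ → ZMod p) (n : ℕ), σ x n = x n + a n (fun i : Fin n => x (i : ℕ)))
    {B N m : ℕ} (hB : B < p ^ N) :
    phiFun p m N (fun x => kalMonomial p B (σ x)) =
      triSum p N (dig p B) (fun i => p - 1 - dig p m i) a := by
  rw [phiFun_apply]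
  unfold triSum
  apply Finset.sum_congr rfl
  intro v _
  rw [kal_eq_prod hp.two_le hB, ← Finset.prod_mul_distrib]
  apply Finset.prod_congr rfl
  intro i _
  rw [ha (extendWord N v) i]

lemma phi_kal_self (p : ℕ) [NeZero p] (hp : p.Prime) {m N : ℕ} (hm : m < p ^ N) :
    phiFun p m N (kalMonomial p m) = (-1) ^ N := by
  rw [phiFun_apply]
  have h1 : ∀ v : Fin N → ZMod p,
      kalMonomial p m (extendWord N v) *
        ∏ i ∈ Finset.range N, (extendWord N v i) ^ (p - 1 - dig p m i) =
      ∏ i : Fin N, (v i) ^ (p - 1) := by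
    intro v
    rw [kal_eq_prod hp.two_le hm, ← Finset.prod_mul_distrib]
    rw [← Fin.prod_univ_eq_prod_range
      (fun i => (extendWord N v i) ^ dig p m i * (extendWord N v i) ^ (p - 1 - dig p m i))]
    apply Finset.prod_congr rfl
    intro i _
    rw [extendWord_lt v i.isLt, ← pow_add, Fin.eta]
    congr 1
    have := dig_le hp.two_le m (i : ℕ)
    omega
  rw [Finset.sum_congr rfl (fun v _ => h1 v)]
  have h2 : ∑ v : Fin N → ZMod p, ∏ i : Fin N, (v i) ^ (p - 1) =
      ∏ _i : Fin N, ∑ t : ZMod p, t ^ (p - 1) := by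
    rw [Finset.prod_univ_sum]
    rw [Fintype.piFinset_univ]
  rw [h2]
  have h3 : ∀ _i : Fin N, ∑ t : ZMod p, t ^ (p-1) = (-1 : ZMod p) := fun _ => powSum_top p hp
  rw [Finset.prod_congr rfl (fun i _ => h3 i), Finset.prod_const]
  simp

lemma phi_kal_lt (p : ℕ) [NeZero p] (hp : p.Prime) {m' m N : ℕ} (h : m' < m) (hm : m < p ^ N) :
    phiFun p m N (kalMonomial p m') = 0 := by
  rw [phiFun_apply]
  obtain ⟨i₀, hd, _⟩ := dig_exists_of_lt hp.two_le m m' h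
  have hi₀ : i₀ < N := by
    by_contra hc
    have : dig p m i₀ = 0 := dig_eq_zero_of_lt
      (lt_of_lt_of_le hm (Nat.pow_le_pow_right (by have := hp.two_le; omega) (by omega)))
    omega
  have h1 : ∀ v : Fin N → ZMod p,
      kalMonomial p m' (extendWord N v) *
        ∏ i ∈ Finset.range N, (extendWord N v i) ^ (p - 1 - dig p m i) =
      ∏ i : Fin N, (v i) ^ (dig p m' i + (p - 1 - dig p m i)) := by
    intro v
    rw [kal_eq_prod hp.two_le (lt_trans h hm), ← Finset.prod_mul_distrib]
    rw [← Fin.prod_univ_eq_prod_range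
      (fun i => (extendWord N v i) ^ dig p m' i * (extendWord N v i) ^ (p - 1 - dig p m i))]
    apply Finset.prod_congr rfl
    intro i _
    rw [extendWord_lt v i.isLt, ← pow_add, Fin.eta]
  rw [Finset.sum_congr rfl (fun v _ => h1 v)]
  have h2 : ∑ v : Fin N → ZMod p, ∏ i : Fin N, (v i) ^ (dig p m' (i:ℕ) + (p - 1 - dig p m (i:ℕ))) =
      ∏ i : Fin N, ∑ t : ZMod p, t ^ (dig p m' (i:ℕ) + (p - 1 - dig p m (i:ℕ))) := by
    rw [Finset.prod_univ_sum, Fintype.piFinset_univ]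
  rw [h2]
  apply Finset.prod_eq_zero (Finset.mem_univ (⟨i₀, hi₀⟩ : Fin N))
  have he : dig p m' i₀ + (p - 1 - dig p m i₀) < p - 1 := by
    have h1 := dig_le hp.two_le m i₀
    have h2 := dig_le hp.two_le m' i₀
    omega
  exact powSum_lt p hp he

/-! ### restriction to the first N coordinates -/

noncomputable def psiFun (p : ℕ) [NeZero p] (m N : ℕ) :
    ((Fin N → ZMod p) → ZMod p) →ₗ[ZMod p] ZMod p where
  toFun h := ∑ v : Fin N → ZMod p,
    h v * ∏ i ∈ Finset.range N, (extendWord N v i) ^ (p - 1 - dig p m i)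
  map_add' f g := by
    simp only [Pi.add_apply, add_mul, Finset.sum_add_distrib]
  map_smul' c f := by
    simp only [Pi.smul_apply, smul_eq_mul, RingHom.id_apply, Finset.mul_sum, mul_assoc]

noncomputable def Rmap (p : ℕ) [NeZero p] (N : ℕ) :
    ((ℕ → ZMod p) → ZMod p) →ₗ[ZMod p] ((Fin N → ZMod p) → ZMod p) where
  toFun f := fun v => f (extendWord N v)
  map_add' f g := rfl
  map_smul' c f := rfl

noncomputable def Lmap (p : ℕ) [NeZero p] (N : ℕ) :
    ((Fin N → ZMod p) → ZMod p) →ₗ[ZMod p] ((ℕ → ZMod p) → ZMod p) where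
  toFun h := fun x => h (fun i : Fin N => x (i : ℕ))
  map_add' f g := rfl
  map_smul' c f := rfl

lemma psi_Rmap (p : ℕ) [NeZero p] (m N : ℕ) (f : (ℕ → ZMod p) → ZMod p) :
    psiFun p m N (Rmap p N f) = phiFun p m N f := rfl

lemma Lmap_Rmap_kal (p : ℕ) [NeZero p] (hp : p.Prime) {m N : ℕ} (hm : m < p ^ N) :
    Lmap p N (Rmap p N (kalMonomial p m)) = kalMonomial p m := by
  funext x
  show kalMonomial p m (extendWord N (fun i : Fin N => x (i : ℕ))) = kalMonomial p m x
  rw [kal_eq_prod hp.two_le hm, kal_eq_prod hp.two_le hm]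
  apply Finset.prod_congr rfl
  intro i hi
  simp only [Finset.mem_range] at hi
  rw [extendWord_lt _ hi]

lemma Lmap_Rmap_dep (p : ℕ) [NeZero p] {N : ℕ} {f : (ℕ → ZMod p) → ZMod p}
    (hf : ∀ x y, (∀ i < N, x i = y i) → f x = f y) :
    Lmap p N (Rmap p N f) = f := by
  funext x
  show f (extendWord N (fun i : Fin N => x (i : ℕ))) = f x
  apply hf
  intro i hi
  rw [extendWord_lt _ hi]

/-- downward-induction extraction of coefficients via the functionals ψ -/
lemma coeff_zero_downward (p : ℕ) [NeZero p] (hp : p.Prime) (N : ℕ)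
    (c : Fin (p ^ N) → ZMod p) (H : (Fin N → ZMod p) → ZMod p)
    (hH : H = ∑ i : Fin (p ^ N), c i • Rmap p N (kalMonomial p (i : ℕ)))
    (T : ℕ) (hpsi : ∀ m', T ≤ m' → m' < p ^ N → psiFun p m' N H = 0) :
    ∀ i : Fin (p ^ N), T ≤ (i : ℕ) → c i = 0 := by
  haveI := Fact.mk hp
  suffices key : ∀ d : ℕ, ∀ i : Fin (p ^ N), p ^ N - (i : ℕ) ≤ d → T ≤ (i : ℕ) → c i = 0 by
    intro i hi
    exact key (p ^ N) i (by omega) hi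
  intro d
  induction d with
  | zero => intro i hi; have := i.isLt; omega
  | succ d IH =>
    intro i hi hT
    have hsum : psiFun p (i : ℕ) N H = ∑ i' : Fin (p ^ N),
        c i' * phiFun p (i : ℕ) N (kalMonomial p (i' : ℕ)) := by
      rw [hH, map_sum]
      apply Finset.sum_congr rfl
      intro i' _
      rw [map_smul, psi_Rmap, smul_eq_mul]
    have hzero : psiFun p (i : ℕ) N H = 0 := hpsi (i : ℕ) hT i.isLt
    have hsingle : ∑ i' : Fin (p ^ N),
        c i' * phiFun p (i : ℕ) N (kalMonomial p (i' : ℕ)) = c i * (-1) ^ N := by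
      rw [Finset.sum_eq_single i]
      · rw [phi_kal_self p hp i.isLt]
      · intro i' _ hne
        rcases lt_or_gt_of_ne (fun h : (i' : ℕ) = (i : ℕ) => hne (Fin.ext h)) with hlt | hgt
        · rw [phi_kal_lt p hp hlt i.isLt, mul_zero]
        · rw [IH i' (by omega) (by omega), zero_mul]
      · intro hmem
        exact absurd (Finset.mem_univ i) hmem
    have : c i * (-1) ^ N = 0 := by rw [← hsingle, ← hsum, hzero]
    have hne : ((-1 : ZMod p)) ^ N ≠ 0 := pow_ne_zero _ (neg_ne_zero.2 one_ne_zero)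
    exact (mul_eq_zero.1 this).resolve_right hne

lemma Rkal_linearIndependent (p : ℕ) [NeZero p] (hp : p.Prime) (N : ℕ) :
    LinearIndependent (ZMod p) (fun i : Fin (p ^ N) => Rmap p N (kalMonomial p (i : ℕ))) := by
  haveI := Fact.mk hp
  rw [Fintype.linearIndependent_iff]
  intro g hg i
  exact coeff_zero_downward p hp N g _ hg.symm 0
    (fun m' _ _ => map_zero _) i (Nat.zero_le _)

lemma Rkal_span_top (p : ℕ) [NeZero p] (hp : p.Prime) (N : ℕ) :
    Submodule.span (ZMod p)
      (Set.range (fun i : Fin (p ^ N) => Rmap p N (kalMonomial p (i : ℕ)))) = ⊤ := by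
  haveI := Fact.mk hp
  apply LinearIndependent.span_eq_top_of_card_eq_finrank' (Rkal_linearIndependent p hp N)
  rw [Fintype.card_fin, Module.finrank_pi]
  rw [Fintype.card_fun, ZMod.card, Fintype.card_fin]

lemma kal_mem_Uspan (p : ℕ) {m n : ℕ} (h : m ≤ n) : kalMonomial p m ∈ Uspan p n :=
  Submodule.subset_span ⟨m, h, rfl⟩

lemma Uspan_mono (p : ℕ) {n n' : ℕ} (h : n ≤ n') : Uspan p n ≤ Uspan p n' :=
  Submodule.span_mono (Set.image_mono (fun m hm => le_trans hm h))

/-- membership in `U_t` from vanishing of the high coefficient functionals -/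
lemma mem_Uspan_of (p : ℕ) [NeZero p] (hp : p.Prime) {N t : ℕ} {f : (ℕ → ZMod p) → ZMod p}
    (hW : ∀ x y, (∀ i < N, x i = y i) → f x = f y) (ht : t < p ^ N)
    (hphi : ∀ m', t < m' → m' < p ^ N → phiFun p m' N f = 0) :
    f ∈ Uspan p t := by
  haveI := Fact.mk hp
  have hmem : Rmap p N f ∈ Submodule.span (ZMod p)
      (Set.range (fun i : Fin (p ^ N) => Rmap p N (kalMonomial p (i : ℕ)))) := by
    rw [Rkal_span_top p hp N]; exact Submodule.mem_top
  rw [Submodule.mem_span_range_iff_exists_fun] at hmem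
  obtain ⟨c, hc⟩ := hmem
  have hf : f = ∑ i : Fin (p ^ N), c i • kalMonomial p (i : ℕ) := by
    have h1 : Lmap p N (Rmap p N f) = f := Lmap_Rmap_dep p hW
    rw [← h1, ← hc, map_sum]
    apply Finset.sum_congr rfl
    intro i _
    rw [map_smul, Lmap_Rmap_kal p hp i.isLt]
  have hc0 : ∀ i : Fin (p ^ N), t + 1 ≤ (i : ℕ) → c i = 0 := by
    apply coeff_zero_downward p hp N c (Rmap p N f) (by rw [← hc]) (t + 1)
    intro m' hm' hm''
    rw [psi_Rmap]
    exact hphi m' (by omega) hm''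
  rw [hf]
  apply Submodule.sum_mem
  intro i _
  by_cases hi : (i : ℕ) ≤ t
  · exact Submodule.smul_mem _ _ (kal_mem_Uspan p hi)
  · rw [hc0 i (by omega), zero_smul]
    exact Submodule.zero_mem _

/-! ### the difference operator -/

noncomputable def deltaL (p : ℕ) [NeZero p] (σ : Equiv.Perm (ℕ → ZMod p)) :
    ((ℕ → ZMod p) → ZMod p) →ₗ[ZMod p] ((ℕ → ZMod p) → ZMod p) where
  toFun f := fun x => f (σ x) - f x
  map_add' f g := by funext x; show (f + g) (σ x) - (f + g) x = _; simp [Pi.add_apply]; ring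
  map_smul' c f := by
    funext x
    show (c • f) (σ x) - (c • f) x = (c • fun x => f (σ x) - f x) x
    simp [Pi.smul_apply, smul_eq_mul]
    ring

lemma kal_zero (p : ℕ) : kalMonomial p 0 = fun _ => 1 := by
  funext x
  unfold kalMonomial
  simp

/-! ### digits of n and n+1 -/

lemma dig_succ_lt {p : ℕ} (hp : 2 ≤ p) {n j q : ℕ} (hq : n + 1 = p ^ j * q) {i : ℕ}
    (hij : i < j) : dig p (n + 1) i = 0 := by
  have h1 : n + 1 = p ^ i * (p ^ (j - i) * q) := by
    rw [hq, ← mul_assoc, ← pow_add]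
    congr 2
    omega
  unfold dig
  rw [h1, Nat.mul_div_cancel_left _ (pow_pos (by omega) i)]
  obtain ⟨s, hs⟩ : ∃ s, j - i = s + 1 := ⟨j - i - 1, by omega⟩
  rw [hs, pow_succ', mul_assoc, Nat.mul_mod_right]

lemma dig_succ_j {p : ℕ} (hp : 2 ≤ p) {n j q : ℕ} (hq : n + 1 = p ^ j * q) :
    dig p (n + 1) j = q % p := by
  unfold dig
  rw [hq, Nat.mul_div_cancel_left _ (pow_pos (by omega) j)]

lemma div_pow_pred {p : ℕ} (hp : 2 ≤ p) {n j q : ℕ} (hq : n + 1 = p ^ j * q) {i : ℕ}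
    (hij : i ≤ j) : n / p ^ i = p ^ (j - i) * q - 1 := by
  have hq1 : 1 ≤ q := by
    rcases Nat.eq_zero_or_pos q with h | h
    · rw [h, mul_zero] at hq; omega
    · exact h
  have h1 : n + 1 = p ^ i * (p ^ (j - i) * q) := by
    rw [hq, ← mul_assoc, ← pow_add]
    congr 2
    omega
  set X := p ^ (j - i) * q with hX
  have hX1 : 1 ≤ X := Nat.one_le_iff_ne_zero.2 (by positivity)
  obtain ⟨Y, hY⟩ : ∃ Y, X = Y + 1 := ⟨X - 1, by omega⟩
  have hpi : 1 ≤ p ^ i := Nat.one_le_pow _ _ (by omega)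
  have hn : n = p ^ i * Y + (p ^ i - 1) := by
    have : p ^ i * X = p ^ i * Y + p ^ i := by rw [hY, Nat.mul_add, mul_one]
    omega
  rw [hn, Nat.mul_add_div (by omega), Nat.div_eq_of_lt (by omega), add_zero]
  omega

lemma dig_n_lt {p : ℕ} (hp : 2 ≤ p) {n j q : ℕ} (hq : n + 1 = p ^ j * q) {i : ℕ}
    (hij : i < j) : dig p n i = p - 1 := by
  have hq1 : 1 ≤ q := by
    rcases Nat.eq_zero_or_pos q with h | h
    · rw [h, mul_zero] at hq; omega
    · exact h
  unfold dig
  rw [div_pow_pred hp hq (le_of_lt hij)]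
  obtain ⟨s, hs⟩ : ∃ s, j - i = s + 1 := ⟨j - i - 1, by omega⟩
  rw [hs, pow_succ', mul_assoc]
  set Z := p ^ s * q with hZ
  have hZ1 : 1 ≤ Z := Nat.one_le_iff_ne_zero.2 (by positivity)
  obtain ⟨W, hW⟩ : ∃ W, Z = W + 1 := ⟨Z - 1, by omega⟩
  have h2 : p * Z - 1 = p * W + (p - 1) := by
    have : p * Z = p * W + p := by rw [hW, Nat.mul_add, mul_one]
    omega
  rw [h2, Nat.mul_add_mod, Nat.mod_eq_of_lt (by omega)]

lemma dig_n_j {p : ℕ} (hp : 2 ≤ p) {n j q : ℕ} (hq : n + 1 = p ^ j * q) (hpq : ¬ p ∣ q) :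
    dig p n j = q % p - 1 := by
  have hr : q % p ≠ 0 := fun h => hpq (Nat.dvd_of_mod_eq_zero h)
  have hrlt : q % p < p := Nat.mod_lt _ (by omega)
  unfold dig
  rw [div_pow_pred hp hq le_rfl, Nat.sub_self, pow_zero, one_mul]
  have h1 : q = p * (q / p) + q % p := (Nat.div_add_mod q p).symm
  have h2 : q - 1 = p * (q / p) + (q % p - 1) := by omega
  rw [h2, Nat.mul_add_mod, Nat.mod_eq_of_lt (by omega)]

lemma dig_n_gt {p : ℕ} (hp : 2 ≤ p) {n j q : ℕ} (hq : n + 1 = p ^ j * q) (hpq : ¬ p ∣ q)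
    {i : ℕ} (hij : j < i) : dig p n i = dig p (n + 1) i := by
  have hdvd : ¬ p ^ i ∣ (n + 1) := by
    intro hdd
    apply hpq
    have h1 : p ^ (j + 1) ∣ p ^ j * q := dvd_trans (pow_dvd_pow p (by omega)) (hq ▸ hdd)
    rw [pow_succ] at h1
    have h2 : p ^ j * p ∣ p ^ j * q := h1
    exact (Nat.mul_dvd_mul_iff_left (pow_pos (by omega) j)).1 h2
  unfold dig
  rw [Nat.succ_div, if_neg hdvd, add_zero]

/-! ### the main coefficient computation -/

lemma alpha_eq_sum (p : ℕ) [NeZero p] {σ : Equiv.Perm (ℕ → ZMod p)}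
    {a : (n : ℕ) → (Fin n → ZMod p) → ZMod p}
    (ha : ∀ (x : ℕ → ZMod p) (n : ℕ), σ x n = x n + a n (fun i : Fin n => x (i : ℕ)))
    (j : ℕ) : alphaKal p σ j = ∑ v : Fin j → ZMod p, a j v := by
  unfold alphaKal
  apply Finset.sum_congr rfl
  intro v _
  rw [ha (extendWord j v) j]
  have hpre : (fun i : Fin j => extendWord j v (i : ℕ)) = v := by
    funext i
    rw [extendWord_lt _ i.isLt]
  rw [hpre]
  ring

lemma refl_triangular (p : ℕ) :
    ∀ (x : ℕ → ZMod p) (n : ℕ), (Equiv.refl (ℕ → ZMod p)) x n =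
      x n + (fun (_ : ℕ) (_ : Fin _ → ZMod p) => (0 : ZMod p)) n (fun i : Fin n => x (i : ℕ)) := by
  intro x n
  simp

lemma phi_delta_top (p : ℕ) [NeZero p] (hp : p.Prime) {σ : Equiv.Perm (ℕ → ZMod p)}
    {a : (n : ℕ) → (Fin n → ZMod p) → ZMod p}
    (ha : ∀ (x : ℕ → ZMod p) (n : ℕ), σ x n = x n + a n (fun i : Fin n => x (i : ℕ)))
    (n j q : ℕ) (hq : n + 1 = p ^ j * q) (hpq : ¬ p ∣ q) :
    phiFun p n (n + 2) (deltaL p σ (kalMonomial p (n + 1))) =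
      (-1) ^ (n + 1 - j) * (-(dig p (n + 1) j : ZMod p)) * alphaKal p σ j := by
  haveI := Fact.mk hp
  have hp2 := hp.two_le
  have hN : n + 1 < p ^ (n + 2) := by
    calc n + 1 < 2 ^ (n + 1) := Nat.lt_two_pow_self
    _ ≤ 2 ^ (n + 2) := Nat.pow_le_pow_right (by omega) (by omega)
    _ ≤ p ^ (n + 2) := Nat.pow_le_pow_left hp2 _
  have hdelta : deltaL p σ (kalMonomial p (n + 1)) =
      (fun x => kalMonomial p (n + 1) (σ x)) - kalMonomial p (n + 1) := rfl
  have hrefl : kalMonomial p (n + 1) =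
      (fun x => kalMonomial p (n + 1) ((Equiv.refl (ℕ → ZMod p)) x)) := rfl
  rw [hdelta, map_sub, phi_comp_triangular p hp ha hN]
  rw [hrefl, phi_comp_triangular p hp (a := fun _ _ => (0 : ZMod p)) (refl_triangular p) hN]
  -- bounds on j
  have hq1 : 1 ≤ q := by
    rcases Nat.eq_zero_or_pos q with h | h
    · rw [h, mul_zero] at hq; omega
    · exact h
  have hjn : j ≤ n := by
    have h1 : p ^ j ≤ n + 1 := by
      calc p ^ j = p ^ j * 1 := (mul_one _).symm
      _ ≤ p ^ j * q := Nat.mul_le_mul_left _ hq1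
      _ = n + 1 := hq.symm
    have h2 : j < 2 ^ j := Nat.lt_two_pow_self
    have h3 : 2 ^ j ≤ p ^ j := Nat.pow_le_pow_left hp2 _
    omega
  have hr : q % p ≠ 0 := fun h => hpq (Nat.dvd_of_mod_eq_zero h)
  have hrlt : q % p < p := Nat.mod_lt _ (by omega)
  have hdjq : dig p (n + 1) j = q % p := dig_succ_j hp2 hq
  have hlead := triSum_lead p hp (n + 2) (dig p (n + 1)) (fun i => p - 1 - dig p n i) a j
    (by omega)
    (by rw [hdjq]; omega)
    (by rw [hdjq]; omega)
    (by show p - 1 - dig p n j = p - dig p (n + 1) j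
        rw [hdjq, dig_n_j hp2 hq hpq]; omega)
    (by intro i hi
        constructor
        · exact dig_succ_lt hp2 hq hi
        · show p - 1 - dig p n i = 0
          rw [dig_n_lt hp2 hq hi]; omega)
    (by intro i hij hiN
        constructor
        · exact dig_le hp2 _ _
        · show p - 1 - dig p n i = p - 1 - dig p (n + 1) i
          rw [dig_n_gt hp2 hq hpq hij])
  rw [hlead, alpha_eq_sum p ha j]
  have : n + 2 - 1 - j = n + 1 - j := by omega
  rw [this]

/-! ### the descent lemma: δ maps U_{t+1} into U_t -/

lemma phi_delta_vanish (p : ℕ) [NeZero p] (hp : p.Prime) {σ : Equiv.Perm (ℕ → ZMod p)}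
    {a : (n : ℕ) → (Fin n → ZMod p) → ZMod p}
    (ha : ∀ (x : ℕ → ZMod p) (n : ℕ), σ x n = x n + a n (fun i : Fin n => x (i : ℕ)))
    (t m' : ℕ) (h1 : t < m') (h2 : m' < p ^ (t + 2)) :
    phiFun p m' (t + 2) (deltaL p σ (kalMonomial p (t + 1))) = 0 := by
  haveI := Fact.mk hp
  have hp2 := hp.two_le
  have hN : t + 1 < p ^ (t + 2) := by
    calc t + 1 < 2 ^ (t + 1) := Nat.lt_two_pow_self
    _ ≤ 2 ^ (t + 2) := Nat.pow_le_pow_right (by omega) (by omega)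
    _ ≤ p ^ (t + 2) := Nat.pow_le_pow_left hp2 _
  have hdelta : deltaL p σ (kalMonomial p (t + 1)) =
      (fun x => kalMonomial p (t + 1) (σ x)) - kalMonomial p (t + 1) := rfl
  have hrefl : kalMonomial p (t + 1) =
      (fun x => kalMonomial p (t + 1) ((Equiv.refl (ℕ → ZMod p)) x)) := rfl
  rw [hdelta, map_sub, phi_comp_triangular p hp ha hN]
  rw [hrefl, phi_comp_triangular p hp (a := fun _ _ => (0 : ZMod p)) (refl_triangular p) hN]
  rcases Nat.lt_or_ge (t + 1) m' with hcase | hcase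
  · -- m' > t + 1 : both triangular sums vanish
    obtain ⟨i₀, hd, hdeq⟩ := dig_exists_of_lt hp2 m' (t + 1) hcase
    have hi₀ : i₀ < t + 2 := by
      by_contra hc
      have : dig p m' i₀ = 0 := dig_eq_zero_of_lt
        (lt_of_lt_of_le h2 (Nat.pow_le_pow_right (by omega) (by omega)))
      omega
    have h0 : dig p (t + 1) i₀ + (p - 1 - dig p m' i₀) < p - 1 := by
      have := dig_le hp2 m' i₀
      omega
    have hhigh : ∀ i, i₀ < i → i < t + 2 →
        dig p (t + 1) i ≤ p - 1 ∧ p - 1 - dig p m' i = p - 1 - dig p (t + 1) i := by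
      intro i hi _
      exact ⟨dig_le hp2 _ _, by rw [hdeq i hi]⟩
    rw [triSum_low p hp (t + 2) _ _ a i₀ hi₀ h0 hhigh,
      triSum_low p hp (t + 2) _ _ (fun _ _ => 0) i₀ hi₀ h0 hhigh, sub_zero]
  · -- m' = t + 1 : both triangular sums equal (-1)^N
    have hm' : m' = t + 1 := by omega
    subst hm'
    have hdiag : ∀ i, i < t + 2 →
        dig p (t + 1) i ≤ p - 1 ∧ p - 1 - dig p (t + 1) i = p - 1 - dig p (t + 1) i := by
      intro i _
      exact ⟨dig_le hp2 _ _, rfl⟩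
    rw [triSum_diag p hp (t + 2) _ _ a hdiag, triSum_diag p hp (t + 2) _ _ (fun _ _ => 0) hdiag,
      sub_self]

lemma delta_kal_mem (p : ℕ) [NeZero p] (hp : p.Prime) {σ : Equiv.Perm (ℕ → ZMod p)}
    (hσ : IsTriangular p σ) (t : ℕ) :
    deltaL p σ (kalMonomial p (t + 1)) ∈ Uspan p t := by
  obtain ⟨a, ha⟩ := hσ
  have hp2 := hp.two_le
  have hN : t + 1 < p ^ (t + 2) := by
    calc t + 1 < 2 ^ (t + 1) := Nat.lt_two_pow_self
    _ ≤ 2 ^ (t + 2) := Nat.pow_le_pow_right (by omega) (by omega)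
    _ ≤ p ^ (t + 2) := Nat.pow_le_pow_left hp2 _
  apply mem_Uspan_of p hp (N := t + 2) ?_ (by omega) (phi_delta_vanish p hp ha t)
  intro x y hxy
  show kalMonomial p (t+1) (σ x) - kalMonomial p (t+1) x
      = kalMonomial p (t+1) (σ y) - kalMonomial p (t+1) y
  have h1 : kalMonomial p (t+1) (σ x) = kalMonomial p (t+1) (σ y) := by
    rw [kal_eq_prod hp2 hN, kal_eq_prod hp2 hN]
    apply Finset.prod_congr rfl
    intro i hi
    simp only [Finset.mem_range] at hi
    rw [ha x i, ha y i, hxy i hi]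
    have : (fun j : Fin i => x (j : ℕ)) = fun j : Fin i => y (j : ℕ) :=
      funext fun j => hxy (j : ℕ) (by have := j.isLt; omega)
    rw [this]
  have h2 : kalMonomial p (t+1) x = kalMonomial p (t+1) y := by
    rw [kal_eq_prod hp2 hN, kal_eq_prod hp2 hN]
    apply Finset.prod_congr rfl
    intro i hi
    simp only [Finset.mem_range] at hi
    rw [hxy i hi]
  rw [h1, h2]

lemma deltaL_mem_Uspan (p : ℕ) [NeZero p] (hp : p.Prime) {σ : Equiv.Perm (ℕ → ZMod p)}
    (hσ : IsTriangular p σ) (n : ℕ) {f : (ℕ → ZMod p) → ZMod p} (hf : f ∈ Uspan p (n + 1)) :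
    deltaL p σ f ∈ Uspan p n := by
  have hle : Uspan p (n + 1) ≤ Submodule.comap (deltaL p σ) (Uspan p n) := by
    apply Submodule.span_le.2
    rintro h ⟨m, hm, rfl⟩
    have hm' : m ≤ n + 1 := hm
    rw [SetLike.mem_coe, Submodule.mem_comap]
    match m with
    | 0 =>
      have : deltaL p σ (kalMonomial p 0) = 0 := by
        funext x
        show kalMonomial p 0 (σ x) - kalMonomial p 0 x = 0
        rw [kal_zero]
        ring
      rw [this]
      exact Submodule.zero_mem _
    | (t + 1) =>
      exact Uspan_mono p (by omega : t ≤ n) (delta_kal_mem p hp hσ t)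
  exact hle hf

/-! ### small helpers for the final assembly -/

lemma lt_pow_two_add {p : ℕ} (hp2 : 2 ≤ p) (n : ℕ) : n + 1 < p ^ (n + 2) := by
  calc n + 1 < 2 ^ (n + 1) := Nat.lt_two_pow_self
  _ ≤ 2 ^ (n + 2) := Nat.pow_le_pow_right (by omega) (by omega)
  _ ≤ p ^ (n + 2) := Nat.pow_le_pow_left hp2 _

lemma deltaL_kal_zero (p : ℕ) [NeZero p] (σ : Equiv.Perm (ℕ → ZMod p)) :
    deltaL p σ (kalMonomial p 0) = 0 := by
  funext x
  show kalMonomial p 0 (σ x) - kalMonomial p 0 x = 0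
  rw [kal_zero]
  ring

lemma phi_vanish_Uspan (p : ℕ) [NeZero p] (hp : p.Prime) {t n N : ℕ} (h : t < n)
    (hn : n < p ^ N) {f : (ℕ → ZMod p) → ZMod p} (hf : f ∈ Uspan p t) :
    phiFun p n N f = 0 := by
  have hle : Uspan p t ≤ LinearMap.ker (phiFun p n N) := by
    apply Submodule.span_le.2
    rintro e ⟨m, hm, rfl⟩
    have hm' : m ≤ t := hm
    rw [SetLike.mem_coe, LinearMap.mem_ker]
    exact phi_kal_lt p hp (by omega) hn
  exact hle hf

lemma inv_symm_eq {α : Type*} (g : Equiv.Perm α) : (g⁻¹ : Equiv.Perm α).symm = g :=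
  Equiv.symm_symm g

lemma symm_triangular {p : ℕ} {G : Subgroup (Equiv.Perm (ℕ → ZMod p))}
    (hG : ∀ g ∈ G, IsTriangular p g) {g : Equiv.Perm (ℕ → ZMod p)} (hg : g ∈ G) :
    IsTriangular p (g.symm : Equiv.Perm (ℕ → ZMod p)) := by
  have h1 : g⁻¹ ∈ G := G.inv_mem hg
  exact hG _ h1


/-- let `G` be a subgroup of `K_p`. The action of `G` is uniserial (for
every `n ≥ 0` the span of `⋃_{g ∈ G} {f ∘ g⁻¹ − f : f ∈ U_{n+1}}` equals `U_n`) if and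
only if for every `k ≥ 0` there exists `g ∈ G` with `α_k(g) ≠ 0`, i.e. every homomorphism
`α_k : G → ZMod p` is nonzero. -/
theorem uniseriality_criterion (p : ℕ) (hp : p.Prime) [NeZero p]
    (G : Subgroup (Equiv.Perm (ℕ → ZMod p)))
    (hG : ∀ g ∈ G, IsTriangular p g) :
    (∀ n : ℕ,
      Submodule.span (ZMod p)
        {h : (ℕ → ZMod p) → ZMod p |
          ∃ g ∈ G, ∃ f ∈ Uspan p (n + 1), h = fun x => f (g.symm x) - f x} =
        Uspan p n) ↔
    (∀ k : ℕ, ∃ g ∈ G, alphaKal p g k ≠ 0) := by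
  haveI := Fact.mk hp
  have hp2 := hp.two_le
  constructor
  · -- uniseriality implies all α_k are nonzero on G
    intro huni k
    by_contra hcon
    push_neg at hcon
    set n := p ^ k - 1 with hn
    have hn1 : n + 1 = p ^ k := by
      have : 1 ≤ p ^ k := Nat.one_le_pow _ _ (by omega)
      omega
    have hNn : n < p ^ (n + 2) := by have := lt_pow_two_add hp2 n; omega
    have hker : Submodule.span (ZMod p)
        {h : (ℕ → ZMod p) → ZMod p |
          ∃ g ∈ G, ∃ f ∈ Uspan p (n + 1), h = fun x => f (g.symm x) - f x} ≤
        LinearMap.ker (phiFun p n (n + 2)) := by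
      apply Submodule.span_le.2
      rintro h ⟨g, hg, f, hf, rfl⟩
      rw [SetLike.mem_coe, LinearMap.mem_ker]
      have hh : (fun x => f (g.symm x) - f x) = deltaL p g.symm f := rfl
      rw [hh]
      obtain ⟨a, ha⟩ := symm_triangular hG hg
      have hle : Uspan p (n + 1) ≤
          LinearMap.ker ((phiFun p n (n + 2)).comp (deltaL p g.symm)) := by
        apply Submodule.span_le.2
        rintro e ⟨m, hm, rfl⟩
        have hm' : m ≤ n + 1 := hm
        rw [SetLike.mem_coe, LinearMap.mem_ker, LinearMap.comp_apply]
        match m with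
        | 0 => rw [deltaL_kal_zero, map_zero]
        | (t + 1) =>
          rcases Nat.lt_or_ge t n with hcase | hcase
          · exact phi_vanish_Uspan p hp hcase hNn
              (delta_kal_mem p hp ⟨a, ha⟩ t)
          · have ht : t = n := by omega
            rw [ht]
            rw [phi_delta_top p hp ha n k 1 (by rw [mul_one]; exact hn1)
              (Nat.Prime.not_dvd_one hp)]
            have hz : alphaKal p (g.symm : Equiv.Perm (ℕ → ZMod p)) k = 0 :=
              hcon g⁻¹ (G.inv_mem hg)
            rw [hz, mul_zero]
      have := hle hf
      rwa [LinearMap.mem_ker, LinearMap.comp_apply] at this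
    have he : kalMonomial p n ∈ Uspan p n := kal_mem_Uspan p le_rfl
    rw [← huni n] at he
    have h0 : phiFun p n (n + 2) (kalMonomial p n) = 0 := hker he
    rw [phi_kal_self p hp hNn] at h0
    exact (pow_ne_zero _ (neg_ne_zero.2 one_ne_zero)) h0
  · -- all α_k nonzero implies uniseriality
    intro hα n
    induction n using Nat.strong_induction_on with
    | _ n IH =>
    have hSmono : ∀ m n' : ℕ, m ≤ n' →
        Submodule.span (ZMod p)
          {h : (ℕ → ZMod p) → ZMod p |
            ∃ g ∈ G, ∃ f ∈ Uspan p (m + 1), h = fun x => f (g.symm x) - f x} ≤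
        Submodule.span (ZMod p)
          {h : (ℕ → ZMod p) → ZMod p |
            ∃ g ∈ G, ∃ f ∈ Uspan p (n' + 1), h = fun x => f (g.symm x) - f x} := by
      intro m n' hmn
      apply Submodule.span_mono
      rintro h ⟨g, hg, f, hf, rfl⟩
      exact ⟨g, hg, f, Uspan_mono p (by omega) hf, rfl⟩
    apply le_antisymm
    · apply Submodule.span_le.2
      rintro h ⟨g, hg, f, hf, rfl⟩
      rw [SetLike.mem_coe]
      have hh : (fun x => f (g.symm x) - f x) = deltaL p g.symm f := rfl
      rw [hh]
      exact deltaL_mem_Uspan p hp (symm_triangular hG hg) n hf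
    · apply Submodule.span_le.2
      rintro e ⟨m, hm, rfl⟩
      have hm' : m ≤ n := hm
      rw [SetLike.mem_coe]
      rcases Nat.lt_or_ge m n with hcase | hcase
      · -- m < n : use the induction hypothesis
        have h1 : kalMonomial p m ∈ Uspan p m := kal_mem_Uspan p le_rfl
        rw [← IH m hcase] at h1
        exact hSmono m n (by omega) h1
      · -- m = n : the main case
        have hmn : m = n := by omega
        subst hmn
        set j := (m + 1).factorization p with hj
        have hq : m + 1 = p ^ j * ((m + 1) / p ^ j) := by
          rw [hj]
          exact (Nat.ordProj_mul_ordCompl_eq_self (m + 1) p).symm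
        have hpq : ¬ p ∣ ((m + 1) / p ^ j) := Nat.not_dvd_ordCompl hp (by omega)
        obtain ⟨g, hg, hαg⟩ := hα j
        obtain ⟨a, ha⟩ := hG g hg
        -- the element δ_g e_{m+1} lies in the span
        have hmemS : deltaL p g (kalMonomial p (m + 1)) ∈ Submodule.span (ZMod p)
            {h : (ℕ → ZMod p) → ZMod p |
              ∃ g' ∈ G, ∃ f ∈ Uspan p (m + 1), h = fun x => f (g'.symm x) - f x} := by
          apply Submodule.subset_span
          refine ⟨g⁻¹, G.inv_mem hg, kalMonomial p (m + 1), kal_mem_Uspan p le_rfl, ?_⟩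
          rw [inv_symm_eq g]
          rfl
        have hmemU : deltaL p g (kalMonomial p (m + 1)) ∈ Uspan p m :=
          deltaL_mem_Uspan p hp ⟨a, ha⟩ m (kal_mem_Uspan p le_rfl)
        -- expand it in the monomials e_0, ..., e_m
        have hset : kalMonomial p '' {m' : ℕ | m' ≤ m} =
            Set.range (fun i : Fin (m + 1) => kalMonomial p (i : ℕ)) := by
          ext f
          constructor
          · rintro ⟨m', hm', rfl⟩
            exact ⟨⟨m', by have : m' ≤ m := hm'; omega⟩, rfl⟩
          · rintro ⟨i, rfl⟩
            exact ⟨(i : ℕ), by have := i.isLt; simp only [Set.mem_setOf_eq]; omega, rfl⟩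
        rw [Uspan, hset, Submodule.mem_span_range_iff_exists_fun] at hmemU
        obtain ⟨c, hc⟩ := hmemU
        have hNm : m < p ^ (m + 2) := by have := lt_pow_two_add hp2 m; omega
        -- the leading coefficient is nonzero
        have hlastval : phiFun p m (m + 2) (deltaL p g (kalMonomial p (m + 1))) =
            c (Fin.last m) * (-1) ^ (m + 2) := by
          rw [← hc, map_sum]
          rw [Finset.sum_eq_single (Fin.last m)]
          · rw [map_smul, smul_eq_mul]
            have hlv : ((Fin.last m : Fin (m + 1)) : ℕ) = m := Fin.val_last m
            rw [hlv, phi_kal_self p hp hNm]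
          · intro i _ hne
            have hilt : (i : ℕ) < m := by
              have h1 := i.isLt
              have h2 : (i : ℕ) ≠ m := fun h => hne (Fin.ext (by simp [h]))
              omega
            rw [map_smul, smul_eq_mul, phi_kal_lt p hp hilt hNm, mul_zero]
          · intro hmem
            exact absurd (Finset.mem_univ _) hmem
        have hval := phi_delta_top p hp ha m j ((m + 1) / p ^ j) hq hpq
        have hne : phiFun p m (m + 2) (deltaL p g (kalMonomial p (m + 1))) ≠ 0 := by
          rw [hval]
          apply mul_ne_zero
          apply mul_ne_zero
          · exact pow_ne_zero _ (neg_ne_zero.2 one_ne_zero)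
          · rw [neg_ne_zero, Ne, ZMod.natCast_eq_zero_iff]
            rw [dig_succ_j hp2 hq]
            intro hdvd
            have h1 : (m + 1) / p ^ j % p < p := Nat.mod_lt _ (by omega)
            have h2 : (m + 1) / p ^ j % p ≠ 0 :=
              fun h => hpq (Nat.dvd_of_mod_eq_zero h)
            have := Nat.le_of_dvd (by omega) hdvd
            omega
          · exact hαg
        have hcne : c (Fin.last m) ≠ 0 := by
          intro h0
          rw [hlastval, h0, zero_mul] at hne
          exact hne rfl
        -- solve for e_m
        rw [Fin.sum_univ_castSucc] at hc
        have hself : c (Fin.last m) • kalMonomial p ((Fin.last m : Fin (m+1)) : ℕ) =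
            deltaL p g (kalMonomial p (m + 1)) -
              ∑ i : Fin m, c i.castSucc • kalMonomial p ((i.castSucc : Fin (m+1)) : ℕ) := by
          rw [← hc]
          ring
        have hem : kalMonomial p m = (c (Fin.last m))⁻¹ •
            (deltaL p g (kalMonomial p (m + 1)) -
              ∑ i : Fin m, c i.castSucc • kalMonomial p ((i.castSucc : Fin (m+1)) : ℕ)) := by
          rw [← hself, smul_smul, inv_mul_cancel₀ hcne, one_smul]
          rfl
        rw [hem]
        apply Submodule.smul_mem
        apply Submodule.sub_mem _ hmemS
        apply Submodule.sum_mem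
        intro i _
        apply Submodule.smul_mem
        have hi : ((i.castSucc : Fin (m + 1)) : ℕ) < m := by simp
        have h1 : kalMonomial p ((i.castSucc : Fin (m+1)) : ℕ) ∈
            Uspan p ((i.castSucc : Fin (m+1)) : ℕ) := kal_mem_Uspan p le_rfl
        rw [← IH _ hi] at h1
        exact hSmono _ m (by omega) h1
end

section
/- Let p be a prime, and let g be an automorphism of the rooted tree over the alphabet ZMod p, with ḡ the induced homeomorphism of (ZMod p)^ℕ. There is a unique column-finite matrix A_g : ℕ × ℕ → ZMod p such that e_n ∘ ḡ⁻¹ = Σ_m A_g(m, n) · e_m for every n (with only finitely many nonzero terms in each column). Then the matrix A_g is p-automatic if and only if g is finite-state. -/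
/-- A matrix `A : ℕ × ℕ → k` is column-finite if every column has finitely many
nonzero entries. -/
def ColumnFinite {k : Type*} [Zero k] (A : ℕ → ℕ → k) : Prop :=
  ∀ j : ℕ, {i : ℕ | A i j ≠ 0}.Finite

/-- The `(i,j)` `d`-decimation of a matrix: `Ξ_d(A)_{ij}(r,s) = A (i + d·r) (j + d·s)`. -/
def matDecimation {k : Type*} (d i j : ℕ) (A : ℕ → ℕ → k) : ℕ → ℕ → k :=
  fun r s => A (i + d * r) (j + d * s)

/-- A matrix is `d`-automatic if it belongs to a finite set of matrices closed under
taking all `d`-decimations. -/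
def MatIsAutomatic {k : Type*} (d : ℕ) (A : ℕ → ℕ → k) : Prop :=
  ∃ S : Set (ℕ → ℕ → k), S.Finite ∧ A ∈ S ∧
    ∀ B ∈ S, ∀ i < d, ∀ j < d, matDecimation d i j B ∈ S

/-- The section `g|_v` of a length- and prefix-preserving bijection `g` of the set of
finite words, at the finite word `v`: it satisfies `g (v ++ w) = g v ++ g|_v w`. -/
def treeSection {X : Type*} (g : List X → List X) (v : List X) :
    List X → List X :=
  fun w => (g (v ++ w)).drop v.length

/-- A tree automorphism is finite-state if its set of sections is finite. -/
def FiniteState {X : Type*} (g : List X → List X) : Prop :=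
  (Set.range (treeSection g)).Finite

namespace Aux19

open Finset

variable {p : ℕ} [hp : Fact p.Prime]

lemma one_lt_p : 1 < p := hp.out.one_lt
lemma p_pos : 0 < p := hp.out.pos

/-- prepend a letter to a sequence -/
def cns (a : ZMod p) (x : ℕ → ZMod p) : ℕ → ZMod p
  | 0 => a
  | n + 1 => x n

/-- tail of a sequence -/
def tl (x : ℕ → ZMod p) : ℕ → ZMod p := fun n => x (n + 1)

@[simp] lemma cns_zero (a : ZMod p) (x : ℕ → ZMod p) : cns a x 0 = a := rfl
@[simp] lemma cns_succ (a : ZMod p) (x : ℕ → ZMod p) (n : ℕ) : cns a x (n + 1) = x n := rfl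
@[simp] lemma tl_cns (a : ZMod p) (x : ℕ → ZMod p) : tl (cns a x) = x := rfl

lemma cns_tl (x : ℕ → ZMod p) : cns (x 0) (tl x) = x := by
  funext n; cases n <;> rfl

lemma kal_eq_prod (n N : ℕ) (hN : n < N) (x : ℕ → ZMod p) :
    kalMonomial p n x = ∏ i ∈ range N, x i ^ (n / p ^ i % p) := by
  unfold kalMonomial
  apply Finset.prod_subset (Finset.range_subset_range.2 hN)
  intro i hi hni
  have hin : n < i := by
    simp only [mem_range] at hi hni; omega
  have h1 : n < p ^ i :=
    lt_of_lt_of_le (Nat.lt_pow_self (n := n) one_lt_p) (Nat.pow_le_pow_right p_pos hin.le)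
  rw [Nat.div_eq_of_lt h1]
  simp

lemma kal_zero (x : ℕ → ZMod p) : kalMonomial p 0 x = 1 := by
  unfold kalMonomial
  simp

lemma kal_rec (j s : ℕ) (hj : j < p) (x : ℕ → ZMod p) :
    kalMonomial p (j + p * s) x = x 0 ^ j * kalMonomial p s (tl x) := by
  have hps : s ≤ p * s := Nat.le_mul_of_pos_left s p_pos
  rw [kal_eq_prod (j + p * s) (j + p * s + 2) (by omega) x, Finset.prod_range_succ']
  have hdiv : (j + p * s) / p = s := by
    rw [Nat.add_mul_div_left _ _ p_pos, Nat.div_eq_of_lt hj, Nat.zero_add]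
  have h0 : (j + p * s) / p ^ 0 % p = j := by
    simp [Nat.add_mul_mod_self_left, Nat.mod_eq_of_lt hj]
  rw [h0, kal_eq_prod s (j + p * s + 1) (by omega) (tl x), mul_comm]
  congr 1
  apply Finset.prod_congr rfl
  intro i _
  have h2 : (j + p * s) / p ^ (i + 1) = s / p ^ i := by
    rw [pow_succ', ← Nat.div_div_eq_div_mul, hdiv]
  rw [h2]
  rfl

lemma kal_pow (k : ℕ) (x : ℕ → ZMod p) : kalMonomial p (p ^ k) x = x k := by
  unfold kalMonomial
  have hkmem : k ∈ range (p ^ k + 1) := mem_range.2 (by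
    have := Nat.lt_pow_self (n := k) hp.out.one_lt; omega)
  rw [Finset.prod_eq_single k]
  · have h1 : p ^ k / p ^ k = 1 := Nat.div_self (Nat.pow_pos (n := k) hp.out.pos)
    rw [h1, Nat.mod_eq_of_lt one_lt_p, pow_one]
  · intro i _ hik
    rcases Nat.lt_or_ge i k with h | h
    · rw [Nat.pow_div h.le p_pos]
      obtain ⟨t, ht⟩ : p ∣ p ^ (k - i) := dvd_pow_self p (by omega)
      rw [ht, Nat.mul_mod_right, pow_zero]
    · have hik' : k < i := lt_of_le_of_ne h (Ne.symm hik)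
      have : p ^ k < p ^ i := Nat.pow_lt_pow_right one_lt_p hik'
      rw [Nat.div_eq_of_lt this]
      simp
  · intro h; exact absurd hkmem h

lemma kal_congr {n : ℕ} {x y : ℕ → ZMod p} (h : ∀ i ≤ n, x i = y i) :
    kalMonomial p n x = kalMonomial p n y := by
  unfold kalMonomial
  refine Finset.prod_congr rfl fun i hi => ?_
  rw [h i (by simpa [Nat.lt_succ_iff] using mem_range.1 hi)]

/-- inverse-Vandermonde coefficients -/
def Lco (p : ℕ) (j : ℕ) (b : ZMod p) : ZMod p :=
  (if j = 0 then 1 else 0) - ((p - 1).choose j : ZMod p) * (-b) ^ (p - 1 - j)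

lemma Lco_dual (a b : ZMod p) :
    ∑ j ∈ range p, Lco p j b * a ^ j = if a = b then 1 else 0 := by
  unfold Lco
  simp_rw [sub_mul]
  rw [Finset.sum_sub_distrib]
  have h1 : ∑ j ∈ range p, (if j = 0 then (1 : ZMod p) else 0) * a ^ j = 1 := by
    rw [Finset.sum_eq_single 0]
    · simp
    · intro j _ hj; simp [hj]
    · intro h; exact absurd (mem_range.2 hp.out.pos) h
  have h2 : ∑ j ∈ range p, ((p - 1).choose j : ZMod p) * (-b) ^ (p - 1 - j) * a ^ j
      = (a - b) ^ (p - 1) := by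
    have hpr : p - 1 + 1 = p := Nat.succ_pred_eq_of_pos hp.out.pos
    rw [sub_eq_add_neg, add_pow, hpr]
    apply Finset.sum_congr rfl
    intro j _
    ring
  rw [h1, h2]
  by_cases hab : a = b
  · subst hab
    rw [sub_self, zero_pow (by have := hp.out.one_lt; omega), sub_zero]
    simp
  · rw [ZMod.pow_card_sub_one_eq_one (sub_ne_zero.2 hab), sub_self]
    simp [hab]

variable [NeZero p]

lemma oneVar (u : ZMod p → ZMod p) (a : ZMod p) :
    u a = ∑ j ∈ range p, (∑ b : ZMod p, u b * Lco p j b) * a ^ j := by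
  have h1 : ∀ j, (∑ b : ZMod p, u b * Lco p j b) * a ^ j
      = ∑ b : ZMod p, u b * (Lco p j b * a ^ j) := by
    intro j; rw [Finset.sum_mul]; apply Finset.sum_congr rfl; intro b _; ring
  simp_rw [h1]
  rw [Finset.sum_comm]
  have h2 : ∀ b, ∑ j ∈ range p, u b * (Lco p j b * a ^ j)
      = u b * (if a = b then 1 else 0) := by
    intro b; rw [← Finset.mul_sum, Lco_dual]
  simp_rw [h2]
  simp

lemma oneVarIndep (b : ℕ → ZMod p) (h : ∀ a : ZMod p, ∑ j ∈ range p, b j * a ^ j = 0) :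
    ∀ j < p, b j = 0 := by
  classical
  set P : Polynomial (ZMod p) := ∑ j ∈ range p, Polynomial.C (b j) * Polynomial.X ^ j with hP
  have heval : ∀ a : ZMod p, P.eval a = 0 := by
    intro a
    rw [hP, Polynomial.eval_finset_sum]
    simpa using h a
  have hdeg : P.natDegree < p := by
    apply lt_of_le_of_lt (Polynomial.natDegree_sum_le _ _)
    rw [Finset.fold_max_lt]
    refine ⟨hp.out.pos, ?_⟩
    intro j hj
    exact lt_of_le_of_lt (Polynomial.natDegree_C_mul_X_pow_le _ _) (mem_range.1 hj)
  have hP0 : P = 0 := by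
    apply Polynomial.eq_zero_of_natDegree_lt_card_of_eval_eq_zero P Function.injective_id heval
    rwa [ZMod.card p]
  intro j hj
  have := congrArg (fun q => Polynomial.coeff q j) hP0
  simp only [hP, Polynomial.finset_sum_coeff, Polynomial.coeff_zero] at this
  rw [← this, Finset.sum_eq_single j]
  · simp
  · intro i _ hij
    simp [Polynomial.coeff_C_mul, Polynomial.coeff_X_pow, Ne.symm hij]
  · intro hjm; exact absurd (mem_range.2 hj) hjm

lemma sum_range_mul {M : Type*} [AddCommMonoid M] (f : ℕ → M) (d e : ℕ) (hd : 0 < d) :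
    ∑ m ∈ range (d * e), f m = ∑ j ∈ range d, ∑ s ∈ range e, f (j + d * s) := by
  rw [← Finset.sum_product']
  apply Finset.sum_nbij' (i := fun m => (m % d, m / d)) (j := fun q => q.1 + d * q.2)
  · intro m hm
    simp only [mem_product, mem_range] at *
    exact ⟨Nat.mod_lt _ hd, (Nat.div_lt_iff_lt_mul hd).2 (mul_comm d e ▸ hm)⟩
  · intro q hq
    simp only [mem_product, mem_range] at *
    calc q.1 + d * q.2 < d + d * q.2 := by omega
    _ = d * (q.2 + 1) := by ring
    _ ≤ d * e := Nat.mul_le_mul_left d hq.2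
  · intro m _; exact Nat.mod_add_div m d
  · intro q hq
    simp only [mem_product, mem_range] at hq
    ext
    · simp only []
      rw [Nat.add_mul_mod_self_left, Nat.mod_eq_of_lt hq.1]
    · simp only []
      rw [Nat.add_mul_div_left _ _ hd, Nat.div_eq_of_lt hq.1, Nat.zero_add]
  · intro m _
    rw [Nat.mod_add_div m d]

lemma indep_pow : ∀ (k : ℕ) (c : ℕ → ZMod p),
    (∀ x : ℕ → ZMod p, ∑ m ∈ range (p ^ k), c m * kalMonomial p m x = 0) →
    ∀ m < p ^ k, c m = 0 := by
  intro k
  induction k with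
  | zero =>
    intro c h m hm
    have h0 : m = 0 := by simpa using hm
    subst h0
    have := h (fun _ => 0)
    simpa [kal_zero] using this
  | succ k ih =>
    intro c h m hm
    have key : ∀ j < p, ∀ y : ℕ → ZMod p,
        ∑ s ∈ range (p ^ k), c (j + p * s) * kalMonomial p s y = 0 := by
      intro j hj y
      have h2 : ∀ a : ZMod p,
          ∑ j' ∈ range p, (∑ s ∈ range (p ^ k), c (j' + p * s) * kalMonomial p s y) * a ^ j' = 0 := by
        intro a
        have hx := h (cns a y)
        rw [pow_succ', sum_range_mul _ p (p ^ k) hp.out.pos] at hx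
        rw [← hx]
        apply Finset.sum_congr rfl
        intro j' hj'
        rw [Finset.sum_mul]
        apply Finset.sum_congr rfl
        intro s _
        rw [kal_rec j' s (mem_range.1 hj') (cns a y)]
        simp only [cns_zero, tl_cns]
        ring
      exact oneVarIndep _ h2 j hj
    have hm1 : m % p < p := Nat.mod_lt _ hp.out.pos
    have hm2 : m / p < p ^ k := by
      rw [Nat.div_lt_iff_lt_mul hp.out.pos]
      rw [pow_succ] at hm
      exact hm
    have hres := ih (fun s => c (m % p + p * s))
      (fun y => key (m % p) hm1 y) (m / p) hm2
    simpa [Nat.mod_add_div m p] using hres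

lemma span_pow : ∀ (k : ℕ) (f : (ℕ → ZMod p) → ZMod p),
    (∀ x y : ℕ → ZMod p, (∀ i < k, x i = y i) → f x = f y) →
    ∃ c : ℕ → ZMod p, ∀ x, f x = ∑ m ∈ range (p ^ k), c m * kalMonomial p m x := by
  intro k
  induction k with
  | zero =>
    intro f hf
    refine ⟨fun _ => f (fun _ => 0), fun x => ?_⟩
    rw [pow_zero]
    simp only [range_one, Finset.sum_singleton, kal_zero, mul_one]
    exact hf x (fun _ => 0) (fun i hi => absurd hi (Nat.not_lt_zero i))
  | succ k ih =>
    intro f hf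
    have hsec : ∀ a : ZMod p, ∃ c : ℕ → ZMod p, ∀ y,
        f (cns a y) = ∑ m ∈ range (p ^ k), c m * kalMonomial p m y := by
      intro a
      apply ih (fun y => f (cns a y))
      intro x y hxy
      apply hf
      intro i hi
      cases i with
      | zero => rfl
      | succ i => exact hxy i (by omega)
    choose cc hcc using hsec
    refine ⟨fun m => ∑ b : ZMod p, cc b (m / p) * Lco p (m % p) b, fun x => ?_⟩
    rw [pow_succ', sum_range_mul _ p (p ^ k) hp.out.pos]
    calc f x = ∑ s ∈ range (p ^ k), cc (x 0) s * kalMonomial p s (tl x) := by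
          rw [← hcc (x 0) (tl x), cns_tl]
    _ = ∑ s ∈ range (p ^ k),
          (∑ j ∈ range p, (∑ b : ZMod p, cc b s * Lco p j b) * (x 0) ^ j)
            * kalMonomial p s (tl x) := by
        apply Finset.sum_congr rfl
        intro s _
        rw [← oneVar (fun b => cc b s) (x 0)]
    _ = ∑ j ∈ range p, ∑ s ∈ range (p ^ k),
          (∑ b : ZMod p, cc b s * Lco p j b) * ((x 0) ^ j * kalMonomial p s (tl x)) := by
        rw [Finset.sum_comm]
        apply Finset.sum_congr rfl
        intro s _
        rw [Finset.sum_mul]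
        apply Finset.sum_congr rfl
        intro j _
        ring
    _ = ∑ j ∈ range p, ∑ s ∈ range (p ^ k),
          (∑ b : ZMod p, cc b ((j + p * s) / p) * Lco p ((j + p * s) % p) b)
            * kalMonomial p (j + p * s) x := by
        apply Finset.sum_congr rfl
        intro j hj
        apply Finset.sum_congr rfl
        intro s _
        have hj' : j < p := mem_range.1 hj
        rw [kal_rec j s hj' x,
          Nat.add_mul_mod_self_left, Nat.mod_eq_of_lt hj',
          Nat.add_mul_div_left _ _ hp.out.pos, Nat.div_eq_of_lt hj', Nat.zero_add]

lemma indep_finset (s : Finset ℕ) (c : ℕ → ZMod p)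
    (h : ∀ x, ∑ m ∈ s, c m * kalMonomial p m x = 0) : ∀ m ∈ s, c m = 0 := by
  classical
  set k := s.sup id + 1 with hk
  have hsub : s ⊆ range (p ^ k) := by
    intro m hm
    rw [mem_range]
    have h1 : m ≤ s.sup id := Finset.le_sup (f := id) hm
    have h2 : s.sup id < p ^ (s.sup id) := Nat.lt_pow_self (n := s.sup id) hp.out.one_lt
    have h3 : p ^ (s.sup id) ≤ p ^ k := Nat.pow_le_pow_right hp.out.pos (by omega)
    omega
  intro m hm
  have hres := indep_pow k (fun m => if m ∈ s then c m else 0) ?_ m (mem_range.1 (hsub hm))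
  · simpa [hm] using hres
  · intro x
    show ∑ m' ∈ range (p ^ k), (if m' ∈ s then c m' else 0) * kalMonomial p m' x = 0
    calc ∑ m' ∈ range (p ^ k), (if m' ∈ s then c m' else 0) * kalMonomial p m' x
        = ∑ m' ∈ s, (if m' ∈ s then c m' else 0) * kalMonomial p m' x :=
          (Finset.sum_subset hsub (fun m' _ hms => by simp [hms])).symm
    _ = ∑ m' ∈ s, c m' * kalMonomial p m' x :=
          Finset.sum_congr rfl (fun m' hm' => by simp [hm'])
    _ = 0 := h x

/-- A permutation of sequences is adic if the first `n` letters of the output only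
depend on the first `n` letters of the input. -/
def Adic {p : ℕ} (G : Equiv.Perm (ℕ → ZMod p)) : Prop :=
  ∀ (n : ℕ) (x y : ℕ → ZMod p), (∀ i < n, x i = y i) → ∀ i < n, G x i = G y i

lemma Adic.symm {G : Equiv.Perm (ℕ → ZMod p)} (hG : Adic G) : Adic G.symm := by
  intro n x y hxy
  classical
  set pad : (Fin n → ZMod p) → (ℕ → ZMod p) :=
    fun t k => if h : k < n then t ⟨k, h⟩ else 0 with hpad
  set F : (Fin n → ZMod p) → (Fin n → ZMod p) := fun t i => G (pad t) i with hF
  have hFsurj : Function.Surjective F := by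
    intro t
    refine ⟨fun i => G.symm (pad t) i, ?_⟩
    funext i
    show G (pad fun i => G.symm (pad t) i) i = t i
    have hagree : ∀ k, k < n → (pad fun i => G.symm (pad t) i) k = G.symm (pad t) k := by
      intro k hk; simp [hpad, hk]
    rw [hG n _ (G.symm (pad t)) hagree i i.2]
    simp [hpad, Equiv.apply_symm_apply, i.2]
  have hFinj : Function.Injective F := Finite.injective_iff_surjective.2 hFsurj
  have h1 : F (fun i => G.symm x i.1) = fun i : Fin n => x i.1 := by
    funext i
    show G (pad fun i : Fin n => G.symm x i.1) i = x i
    have hagree : ∀ k, k < n → (pad fun i : Fin n => G.symm x i.1) k = G.symm x k := by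
      intro k hk; simp [hpad, hk]
    rw [hG n _ (G.symm x) hagree i i.2]
    simp
  have h2 : F (fun i => G.symm y i.1) = fun i : Fin n => y i.1 := by
    funext i
    show G (pad fun i : Fin n => G.symm y i.1) i = y i
    have hagree : ∀ k, k < n → (pad fun i : Fin n => G.symm y i.1) k = G.symm y k := by
      intro k hk; simp [hpad, hk]
    rw [hG n _ (G.symm y) hagree i i.2]
    simp
  have h3 : (fun i : Fin n => x i.1) = fun i : Fin n => y i.1 :=
    funext fun i => hxy i i.2
  have h4 : (fun i : Fin n => G.symm x i.1) = fun i : Fin n => G.symm y i.1 :=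
    hFinj (by rw [h1, h2]; exact h3)
  intro i hi
  exact congrFun h4 ⟨i, hi⟩

/-- Adic permutations of `(ZMod p)^ℕ`. -/
def APerm (p : ℕ) := {G : Equiv.Perm (ℕ → ZMod p) // Adic G}

lemma root_surj (G : APerm p) :
    Function.Surjective (fun a => G.1 (cns a (fun _ => 0)) 0) := by
  intro b
  refine ⟨G.1.symm (cns b (fun _ => 0)) 0, ?_⟩
  show G.1 (cns (G.1.symm (cns b fun _ => 0) 0) fun _ => 0) 0 = b
  have := G.2 1 (cns (G.1.symm (cns b fun _ => 0) 0) fun _ => 0)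
    (G.1.symm (cns b fun _ => 0))
    (fun i hi => by
      have : i = 0 := by omega
      subst this; rfl) 0 one_pos
  rw [this, Equiv.apply_symm_apply]
  rfl

/-- The root permutation of an adic permutation. -/
noncomputable def rootp (G : APerm p) : Equiv.Perm (ZMod p) :=
  Equiv.ofBijective (fun a => G.1 (cns a (fun _ => 0)) 0)
    ⟨Finite.injective_iff_surjective.2 (root_surj G), root_surj G⟩

lemma rootp_apply (G : APerm p) (u : ℕ → ZMod p) : rootp G (u 0) = G.1 u 0 := by
  show G.1 (cns (u 0) fun _ => 0) 0 = G.1 u 0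
  exact G.2 1 _ u (fun i hi => by
    have : i = 0 := by omega
    subst this; rfl) 0 one_pos

/-- The section of an adic permutation at a letter. -/
noncomputable def secA (G : APerm p) (a : ZMod p) : APerm p := by
  refine ⟨{ toFun := fun y => tl (G.1 (cns a y))
            invFun := fun z => tl (G.1.symm (cns (rootp G a) z))
            left_inv := ?_
            right_inv := ?_ }, ?_⟩
  · intro y
    have h0 : G.1 (cns a y) 0 = rootp G a := (rootp_apply G (cns a y)).symm
    show tl (G.1.symm (cns (rootp G a) (tl (G.1 (cns a y))))) = y
    rw [← h0, cns_tl, Equiv.symm_apply_apply, tl_cns]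
  · intro z
    set u := G.1.symm (cns (rootp G a) z) with hu
    have hGu : G.1 u = cns (rootp G a) z := Equiv.apply_symm_apply _ _
    have hu0 : u 0 = a := by
      apply (rootp G).injective
      rw [rootp_apply G u, hGu]
      rfl
    show tl (G.1 (cns a (tl u))) = z
    rw [← hu0, cns_tl, hGu, tl_cns]
  · intro n x y hxy i hi
    show tl (G.1 (cns a x)) i = tl (G.1 (cns a y)) i
    unfold tl
    apply G.2 (n + 1) (cns a x) (cns a y) ?_ (i + 1) (by omega)
    intro k hk
    cases k with
    | zero => rfl
    | succ k => exact hxy k (by omega)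

lemma secA_apply (G : APerm p) (a : ZMod p) (y : ℕ → ZMod p) :
    (secA G a).1 y = tl (G.1 (cns a y)) := rfl

lemma secA_symm_apply (G : APerm p) (a : ZMod p) (z : ℕ → ZMod p) :
    (secA G a).1.symm z = tl (G.1.symm (cns (rootp G a) z)) := rfl

lemma symm_decomp (G : APerm p) (x : ℕ → ZMod p) :
    G.1.symm x = cns ((rootp G).symm (x 0))
      ((secA G ((rootp G).symm (x 0))).1.symm (tl x)) := by
  set b := (rootp G).symm (x 0) with hb
  rw [secA_symm_apply]
  have h1 : rootp G b = x 0 := Equiv.apply_symm_apply _ _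
  rw [h1, cns_tl]
  have h2 : G.1.symm x 0 = b := by
    apply (rootp G).injective
    rw [rootp_apply G (G.1.symm x), Equiv.apply_symm_apply, h1]
  rw [← h2, cns_tl]

/-- Iterated sections along a word. -/
noncomputable def secL (G : APerm p) : List (ZMod p) → APerm p
  | [] => G
  | a :: v => secL (secA G a) v

lemma secL_append (G : APerm p) (v : List (ZMod p)) (b : ZMod p) :
    secL G (v ++ [b]) = secA (secL G v) b := by
  induction v generalizing G with
  | nil => rfl
  | cons a v ih => exact ih (secA G a)

/-- extend a word to a sequence by `0`. -/
def vext (v : List (ZMod p)) (x : ℕ → ZMod p) : ℕ → ZMod p :=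
  fun i => if h : i < v.length then v.get ⟨i, h⟩ else x (i - v.length)

lemma vext_nil (x : ℕ → ZMod p) : vext [] x = x := by
  funext i; simp [vext]

lemma vext_cons (a : ZMod p) (v : List (ZMod p)) (x : ℕ → ZMod p) :
    vext (a :: v) x = cns a (vext v x) := by
  funext i
  cases i with
  | zero => simp [vext]
  | succ i =>
    simp only [vext, cns_succ, List.length_cons]
    by_cases h : i < v.length
    · rw [dif_pos (by omega), dif_pos h]
      rfl
    · rw [dif_neg (by omega), dif_neg h]
      congr 1
      omega

lemma secL_spec (v : List (ZMod p)) (G : APerm p) (x : ℕ → ZMod p) (n : ℕ) :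
    (secL G v).1 x n = G.1 (vext v x) (v.length + n) := by
  induction v generalizing G with
  | nil =>
    show G.1 x n = G.1 (vext [] x) ([].length + n)
    rw [vext_nil, List.length_nil, Nat.zero_add]
  | cons a v ih =>
    show (secL (secA G a) v).1 x n = G.1 (vext (a :: v) x) ((a :: v).length + n)
    rw [ih (secA G a), secA_apply]
    show G.1 (cns a (vext v x)) (v.length + n + 1) = G.1 (vext (a :: v) x) ((a :: v).length + n)
    rw [vext_cons]
    have hidx : v.length + n + 1 = (a :: v).length + n := by
      simp only [List.length_cons]; omega
    rw [hidx]

/-- The defining property of the matrix of an adic permutation. -/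
def Sat (G : APerm p) (A : ℕ → ℕ → ZMod p) : Prop :=
  ColumnFinite A ∧ ∀ (n : ℕ) (x : ℕ → ZMod p),
    kalMonomial p n (G.1.symm x) = ∑ᶠ m : ℕ, A m n * kalMonomial p m x

lemma sat_of_bounded {G : APerm p} {A : ℕ → ℕ → ZMod p} (N : ℕ → ℕ)
    (hb : ∀ m n, N n ≤ m → A m n = 0)
    (h : ∀ (n : ℕ) (x : ℕ → ZMod p),
      kalMonomial p n (G.1.symm x) = ∑ m ∈ range (N n), A m n * kalMonomial p m x) :
    Sat G A := by
  constructor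
  · intro n
    apply Set.Finite.subset (Finset.range (N n)).finite_toSet
    intro m hm
    simp only [Set.mem_setOf_eq] at hm
    simp only [Finset.coe_range, Set.mem_Iio]
    by_contra hc
    exact hm (hb m n (not_lt.1 hc))
  · intro n x
    rw [h n x]
    symm
    apply finsum_eq_sum_of_support_subset
    intro m hm
    simp only [Function.mem_support] at hm
    simp only [Finset.coe_range, Set.mem_Iio]
    by_contra hc
    rw [hb m n (not_lt.1 hc), zero_mul] at hm
    exact hm rfl

lemma exists_mat (G : APerm p) :
    ∃ A : ℕ → ℕ → ZMod p, (∀ m n, p ^ (n + 1) ≤ m → A m n = 0) ∧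
      ∀ (n : ℕ) (x : ℕ → ZMod p),
        kalMonomial p n (G.1.symm x) = ∑ m ∈ range (p ^ (n + 1)), A m n * kalMonomial p m x := by
  have hdep : ∀ n (x y : ℕ → ZMod p), (∀ i < n + 1, x i = y i) →
      kalMonomial p n (G.1.symm x) = kalMonomial p n (G.1.symm y) := by
    intro n x y h
    exact kal_congr (fun i hi => Adic.symm G.2 (n + 1) x y h i (by omega))
  choose c hc using fun n => span_pow (n + 1) (fun x => kalMonomial p n (G.1.symm x)) (hdep n)
  refine ⟨fun m n => if m < p ^ (n + 1) then c n m else 0, ?_, ?_⟩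
  · intro m n hmn
    simp [not_lt.2 hmn]
  · intro n x
    rw [hc n x]
    apply Finset.sum_congr rfl
    intro m hm
    show c n m * kalMonomial p m x = (if m < p ^ (n + 1) then c n m else 0) * kalMonomial p m x
    rw [if_pos (mem_range.1 hm)]

lemma sat_unique {G : APerm p} {A B : ℕ → ℕ → ZMod p} (hA : Sat G A) (hB : Sat G B) :
    A = B := by
  funext m n
  classical
  set s := (hA.1 n).toFinset ∪ (hB.1 n).toFinset with hs
  have hsum : ∀ x, ∑ m' ∈ s, (A m' n - B m' n) * kalMonomial p m' x = 0 := by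
    intro x
    have h1 : ∑ᶠ m', A m' n * kalMonomial p m' x = ∑ m' ∈ s, A m' n * kalMonomial p m' x := by
      apply finsum_eq_sum_of_support_subset
      intro m' hm'
      simp only [Function.mem_support] at hm'
      have : A m' n ≠ 0 := fun h0 => hm' (by rw [h0, zero_mul])
      simp [hs, Set.Finite.mem_toFinset]
      left
      exact this
    have h2 : ∑ᶠ m', B m' n * kalMonomial p m' x = ∑ m' ∈ s, B m' n * kalMonomial p m' x := by
      apply finsum_eq_sum_of_support_subset
      intro m' hm'
      simp only [Function.mem_support] at hm'
      have : B m' n ≠ 0 := fun h0 => hm' (by rw [h0, zero_mul])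
      simp [hs, Set.Finite.mem_toFinset]
      right
      exact this
    simp_rw [sub_mul]
    rw [Finset.sum_sub_distrib, ← h1, ← h2, ← hA.2 n x, ← hB.2 n x, sub_self]
  have hz := indep_finset s _ hsum
  by_cases hm : m ∈ s
  · exact sub_eq_zero.1 (hz m hm)
  · simp only [hs, Finset.mem_union, Set.Finite.mem_toFinset, Set.mem_setOf_eq, not_or,
      not_not] at hm
    rw [hm.1, hm.2]

/-- The matrix of an adic permutation. -/
noncomputable def matOf (G : APerm p) : ℕ → ℕ → ZMod p := (exists_mat G).choose

lemma matOf_bound (G : APerm p) : ∀ m n, p ^ (n + 1) ≤ m → matOf G m n = 0 :=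
  (exists_mat G).choose_spec.1

lemma matOf_sum (G : APerm p) : ∀ (n : ℕ) (x : ℕ → ZMod p),
    kalMonomial p n (G.1.symm x) = ∑ m ∈ range (p ^ (n + 1)), matOf G m n * kalMonomial p m x :=
  (exists_mat G).choose_spec.2

lemma matOf_sat (G : APerm p) : Sat G (matOf G) :=
  sat_of_bounded _ (matOf_bound G) (matOf_sum G)

lemma eq_matOf {G : APerm p} {A : ℕ → ℕ → ZMod p} (h : Sat G A) : A = matOf G :=
  sat_unique h (matOf_sat G)

lemma sat_faithful {G H : APerm p} {A : ℕ → ℕ → ZMod p} (hG : Sat G A) (hH : Sat H A) :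
    G = H := by
  have hsymm : ∀ x k, G.1.symm x k = H.1.symm x k := by
    intro x k
    have h1 := hG.2 (p ^ k) x
    have h2 := hH.2 (p ^ k) x
    rw [kal_pow] at h1 h2
    rw [h1, h2]
  have heq : G.1.symm = H.1.symm := Equiv.ext fun x => funext (hsymm x)
  apply Subtype.ext
  have := congrArg Equiv.symm heq
  simpa using this

lemma sat_B (G : APerm p) : Sat G (fun m n => ∑ b : ZMod p,
    Lco p (m % p) b * ((rootp G).symm b) ^ (n % p)
      * matOf (secA G ((rootp G).symm b)) (m / p) (n / p)) := by
  apply sat_of_bounded (fun n => p ^ (n / p + 1) * p)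
  · intro m n hmn
    apply Finset.sum_eq_zero
    intro b _
    have hdiv : p ^ (n / p + 1) ≤ m / p := by
      rw [Nat.le_div_iff_mul_le hp.out.pos]
      exact hmn
    rw [matOf_bound _ _ _ hdiv, mul_zero]
  · intro n x
    set j := n % p with hj
    set s := n / p with hs
    have hjp : j < p := Nat.mod_lt _ hp.out.pos
    have hnjs : n = j + p * s := (Nat.mod_add_div n p).symm
    set b0 := (rootp G).symm (x 0) with hb0
    -- LHS
    have hL : kalMonomial p n (G.1.symm x)
        = ∑ r ∈ range (p ^ (s + 1)),
            (((rootp G).symm (x 0)) ^ j * matOf (secA G b0) r s) * kalMonomial p r (tl x) := by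
      conv_lhs => rw [hnjs]
      rw [kal_rec j s hjp (G.1.symm x)]
      rw [symm_decomp G x]
      simp only [cns_zero, tl_cns]
      rw [← hb0, matOf_sum (secA G b0) s (tl x), Finset.mul_sum]
      apply Finset.sum_congr rfl
      intro r _
      ring
    rw [hL]
    -- RHS reindex
    rw [mul_comm (p ^ (s + 1)) p, sum_range_mul _ p (p ^ (s + 1)) hp.out.pos]
    -- expand each coefficient function via oneVar
    have hme : ∀ r, (((rootp G).symm (x 0)) ^ j * matOf (secA G b0) r s)
        = ∑ i ∈ range p, (∑ b : ZMod p,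
            (((rootp G).symm b) ^ j * matOf (secA G ((rootp G).symm b)) r s) * Lco p i b)
              * (x 0) ^ i := by
      intro r
      exact oneVar (fun t => ((rootp G).symm t) ^ j * matOf (secA G ((rootp G).symm t)) r s) (x 0)
    calc ∑ r ∈ range (p ^ (s + 1)),
          (((rootp G).symm (x 0)) ^ j * matOf (secA G b0) r s) * kalMonomial p r (tl x)
        = ∑ r ∈ range (p ^ (s + 1)), ∑ i ∈ range p,
            (∑ b : ZMod p,
              (((rootp G).symm b) ^ j * matOf (secA G ((rootp G).symm b)) r s) * Lco p i b)
              * ((x 0) ^ i * kalMonomial p r (tl x)) := by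
          apply Finset.sum_congr rfl
          intro r _
          rw [hme r, Finset.sum_mul]
          apply Finset.sum_congr rfl
          intro i _
          ring
    _ = ∑ i ∈ range p, ∑ r ∈ range (p ^ (s + 1)),
          (∑ b : ZMod p,
            Lco p ((i + p * r) % p) b * ((rootp G).symm b) ^ (n % p)
              * matOf (secA G ((rootp G).symm b)) ((i + p * r) / p) (n / p))
            * kalMonomial p (i + p * r) x := by
        rw [Finset.sum_comm]
        apply Finset.sum_congr rfl
        intro i hi
        apply Finset.sum_congr rfl
        intro r _
        have hip : i < p := mem_range.1 hi
        rw [kal_rec i r hip x, Nat.add_mul_mod_self_left, Nat.mod_eq_of_lt hip,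
          Nat.add_mul_div_left _ _ hp.out.pos, Nat.div_eq_of_lt hip, Nat.zero_add,
          ← hj, ← hs]
        rw [Finset.sum_mul, Finset.sum_mul]
        apply Finset.sum_congr rfl
        intro b _
        ring

lemma mat_decim (G : APerm p) {i j : ℕ} (hi : i < p) (hj : j < p) (r s : ℕ) :
    matOf G (i + p * r) (j + p * s) = ∑ b : ZMod p,
      Lco p i b * ((rootp G).symm b) ^ j * matOf (secA G ((rootp G).symm b)) r s := by
  have hB := eq_matOf (sat_B G)
  have hBij := congrFun (congrFun hB.symm (i + p * r)) (j + p * s)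
  rw [hBij]
  show (∑ b : ZMod p, Lco p ((i + p * r) % p) b * ((rootp G).symm b) ^ ((j + p * s) % p)
    * matOf (secA G ((rootp G).symm b)) ((i + p * r) / p) ((j + p * s) / p)) = _
  rw [Nat.add_mul_mod_self_left, Nat.mod_eq_of_lt hi,
    Nat.add_mul_mod_self_left, Nat.mod_eq_of_lt hj,
    Nat.add_mul_div_left _ _ hp.out.pos, Nat.div_eq_of_lt hi, Nat.zero_add,
    Nat.add_mul_div_left _ _ hp.out.pos, Nat.div_eq_of_lt hj, Nat.zero_add]

lemma mat_sec (G : APerm p) (b : ZMod p) (r s : ℕ) :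
    matOf (secA G b) r s
      = ∑ i ∈ range p, (rootp G b) ^ i * matOf G (i + p * r) (0 + p * s) := by
  have h0 : ∀ i ∈ range p, (rootp G b) ^ i * matOf G (i + p * r) (0 + p * s)
      = ∑ b' : ZMod p, (rootp G b) ^ i * (Lco p i b'
          * matOf (secA G ((rootp G).symm b')) r s) := by
    intro i hi
    rw [mat_decim G (mem_range.1 hi) hp.out.pos r s]
    rw [Finset.mul_sum]
    apply Finset.sum_congr rfl
    intro b' _
    rw [pow_zero]
    ring
  rw [Finset.sum_congr rfl h0, Finset.sum_comm]
  have h1 : ∀ b' : ZMod p,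
      ∑ i ∈ range p, (rootp G b) ^ i * (Lco p i b' * matOf (secA G ((rootp G).symm b')) r s)
      = (if rootp G b = b' then 1 else 0) * matOf (secA G ((rootp G).symm b')) r s := by
    intro b'
    rw [← Lco_dual (rootp G b) b', Finset.sum_mul]
    apply Finset.sum_congr rfl
    intro i _
    ring
  simp_rw [h1]
  rw [Finset.sum_eq_single (rootp G b)]
  · rw [if_pos rfl, one_mul, Equiv.symm_apply_apply]
  · intro b' _ hb'
    rw [if_neg (fun hcon => hb' hcon.symm), zero_mul]
  · intro hmem; exact absurd (Finset.mem_univ _) hmem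

/-- decimation as a linear map -/
def decimLM (d i j : ℕ) : (ℕ → ℕ → ZMod p) →ₗ[ZMod p] (ℕ → ℕ → ZMod p) where
  toFun := matDecimation d i j
  map_add' := fun _ _ => rfl
  map_smul' := fun _ _ => rfl

lemma span_set_finite {s : Set (ℕ → ℕ → ZMod p)} (hs : s.Finite) :
    ((Submodule.span (ZMod p) s : Submodule (ZMod p) (ℕ → ℕ → ZMod p))
      : Set (ℕ → ℕ → ZMod p)).Finite := by
  haveI := Module.Finite.span_of_finite (ZMod p) hs
  haveI : Finite (Submodule.span (ZMod p) s) := Module.finite_of_finite (ZMod p)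
  exact Set.toFinite _

lemma span_decim_closed {T : Set (ℕ → ℕ → ZMod p)}
    (hT : ∀ B ∈ T, ∀ i < p, ∀ j < p,
      matDecimation p i j B ∈ Submodule.span (ZMod p) T) :
    ∀ B ∈ Submodule.span (ZMod p) T, ∀ i < p, ∀ j < p,
      matDecimation p i j B ∈ Submodule.span (ZMod p) T := by
  intro B hB i hi j hj
  have hrw : matDecimation p i j B = decimLM p i j B := rfl
  rw [hrw]
  have hmap : (Submodule.span (ZMod p) T).map (decimLM p i j)
      ≤ Submodule.span (ZMod p) T := by
    rw [Submodule.map_span]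
    apply Submodule.span_le.2
    rintro _ ⟨C, hC, rfl⟩
    exact hT C hC i hi j hj
  exact hmap ⟨B, hB, rfl⟩

lemma matOf_secA_mem {V : Submodule (ZMod p) (ℕ → ℕ → ZMod p)} {G : APerm p}
    (hG : matOf G ∈ V)
    (hdec : ∀ B ∈ V, ∀ i < p, ∀ j < p, matDecimation p i j B ∈ V) (b : ZMod p) :
    matOf (secA G b) ∈ V := by
  have hfun : matOf (secA G b)
      = ∑ i ∈ range p, (rootp G b) ^ i • matDecimation p i 0 (matOf G) := by
    funext r s
    rw [mat_sec G b r s]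
    rw [Finset.sum_apply, Finset.sum_apply]
    apply Finset.sum_congr rfl
    intro i _
    simp [matDecimation]
  rw [hfun]
  apply Submodule.sum_mem
  intro i hi
  exact Submodule.smul_mem _ _ (hdec _ hG i (mem_range.1 hi) 0 hp.out.pos)

/-- extend a word to a sequence by `0` -/
def ext0 (w : List (ZMod p)) : ℕ → ZMod p := fun i => w.getD i 0

lemma ofFn_ext0 (w : List (ZMod p)) :
    (List.ofFn fun i : Fin w.length => ext0 w i) = w := by
  apply List.ext_get
  · simp
  · intro n h1 h2
    rw [List.get_ofFn]
    show ext0 w _ = _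
    simp only [Fin.cast]
    rw [ext0, List.getD_eq_getElem w 0 h2]
    rfl

lemma ext0_append (v w : List (ZMod p)) : ext0 (v ++ w) = vext v (ext0 w) := by
  funext i
  unfold ext0 vext
  by_cases h : i < v.length
  · rw [dif_pos h, List.getD_append _ _ _ _ h, List.getD_eq_getElem _ _ h]
    rfl
  · rw [dif_neg h, List.getD_append_right _ _ _ _ (not_lt.1 h)]

lemma ext0_ofFn (n : ℕ) (x : ℕ → ZMod p) (i : ℕ) (h : i < n) :
    ext0 (List.ofFn fun k : Fin n => x k) i = x i := by
  unfold ext0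
  rw [List.getD_eq_getElem _ _ (by simpa using h), List.getElem_ofFn]

/-- canonical list-level map associated with an adic permutation -/
def theta (H : APerm p) : List (ZMod p) → List (ZMod p) :=
  fun w => List.ofFn fun i : Fin w.length => H.1 (ext0 w) i

lemma theta_val (H : APerm p) (x : ℕ → ZMod p) (n : ℕ) :
    H.1 x n = (theta H (List.ofFn fun i : Fin (n + 1) => x i)).getD n 0 := by
  unfold theta
  set w := List.ofFn fun i : Fin (n + 1) => x ↑i with hw
  have hn : n < (List.ofFn fun i : Fin w.length => H.1 (ext0 w) ↑i).length := by
    simp [hw]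
  rw [List.getD_eq_getElem _ _ hn, List.getElem_ofFn]
  apply H.2 (n + 1) x (ext0 w) ?_ n (by omega)
  intro k hk
  rw [hw, ext0_ofFn (n + 1) x k hk]

lemma theta_inj : Function.Injective (theta (p := p)) := by
  intro H H' h
  have hval : ∀ x n, H.1 x n = H'.1 x n := by
    intro x n
    rw [theta_val H x n, theta_val H' x n, h]
  apply Subtype.ext
  apply Equiv.coe_fn_injective
  exact funext fun x => funext (hval x)

lemma decim_mem_span {T : Set (ℕ → ℕ → ZMod p)} {G : APerm p}
    (hsec : ∀ b : ZMod p, matOf (secA G b) ∈ T) {i j : ℕ} (hi : i < p) (hj : j < p) :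
    matDecimation p i j (matOf G) ∈ Submodule.span (ZMod p) T := by
  have hfun : matDecimation p i j (matOf G) = ∑ b : ZMod p,
      (Lco p i b * ((rootp G).symm b) ^ j) • matOf (secA G ((rootp G).symm b)) := by
    funext r s
    unfold matDecimation
    rw [mat_decim G hi hj r s, Finset.sum_apply, Finset.sum_apply]
    apply Finset.sum_congr rfl
    intro b _
    simp [mul_assoc]
  rw [hfun]
  exact Submodule.sum_mem _ fun b _ =>
    Submodule.smul_mem _ _ (Submodule.subset_span (hsec _))

end Aux19

/-- let `g` be an automorphism of the rooted tree over `ZMod p` (a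
permutation of finite words preserving length and prefixes) and `ḡ` the induced
homeomorphism of `(ZMod p)^ℕ`. There is a unique column-finite matrix `A_g` with
`e_n ∘ ḡ⁻¹ = Σ_m A_g(m,n) e_m` for every `n`, and any such matrix is `p`-automatic
if and only if `g` is finite-state. -/
theorem automatic_iff_finiteState (p : ℕ) (hp : p.Prime) [NeZero p]
    (g : Equiv.Perm (List (ZMod p)))
    (hlen : ∀ v : List (ZMod p), (g v).length = v.length)
    (hpre : ∀ v w : List (ZMod p), v <+: w → g v <+: g w)
    (gbar : Equiv.Perm (ℕ → ZMod p))
    (hbar : ∀ (x : ℕ → ZMod p) (n : ℕ),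
      g (List.ofFn fun i : Fin n => x (i : ℕ)) =
        List.ofFn fun i : Fin n => gbar x (i : ℕ)) :
    (∃! A : ℕ → ℕ → ZMod p, ColumnFinite A ∧
        ∀ (n : ℕ) (x : ℕ → ZMod p),
          kalMonomial p n (gbar.symm x) = ∑ᶠ m : ℕ, A m n * kalMonomial p m x) ∧
    ∀ A : ℕ → ℕ → ZMod p,
      (ColumnFinite A ∧
        ∀ (n : ℕ) (x : ℕ → ZMod p),
          kalMonomial p n (gbar.symm x) = ∑ᶠ m : ℕ, A m n * kalMonomial p m x) →
      (MatIsAutomatic p A ↔ FiniteState (⇑g)) := by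
  haveI hpf : Fact p.Prime := ⟨hp⟩
  -- `gbar` is adic
  have hadic : Aux19.Adic gbar := by
    intro n x y hxy i hi
    have h1 := hbar x n
    have h2 := hbar y n
    have h3 : (List.ofFn fun i : Fin n => x i) = List.ofFn fun i : Fin n => y i :=
      congrArg List.ofFn (funext fun i => hxy i i.2)
    rw [h3, h2] at h1
    have h4 := List.ofFn_inj.1 h1
    exact (congrFun h4 ⟨i, hi⟩).symm
  set G : Aux19.APerm p := ⟨gbar, hadic⟩ with hG
  have hsatG : Aux19.Sat G (Aux19.matOf G) := Aux19.matOf_sat G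
  -- the bridge between list sections and sequence sections
  have hts : ∀ v : List (ZMod p), treeSection (⇑g) v = Aux19.theta (Aux19.secL G v) := by
    intro v
    funext w
    show (g (v ++ w)).drop v.length = _
    have hgvw : g (v ++ w)
        = List.ofFn (fun i : Fin (v ++ w).length => gbar (Aux19.ext0 (v ++ w)) ↑i) := by
      conv_lhs => rw [← Aux19.ofFn_ext0 (v ++ w)]
      exact hbar (Aux19.ext0 (v ++ w)) (v ++ w).length
    rw [hgvw]
    unfold Aux19.theta
    apply List.ext_getElem
    · simp
    · intro m h1 h2
      rw [List.getElem_drop, List.getElem_ofFn, List.getElem_ofFn]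
      show gbar (Aux19.ext0 (v ++ w)) (v.length + m) = (Aux19.secL G v).1 (Aux19.ext0 w) m
      rw [Aux19.secL_spec v G (Aux19.ext0 w) m, ← Aux19.ext0_append v w]
  constructor
  · exact ⟨Aux19.matOf G, ⟨hsatG.1, hsatG.2⟩, fun A' hA' => Aux19.eq_matOf ⟨hA'.1, hA'.2⟩⟩
  · intro A hA
    have hAeq : A = Aux19.matOf G := Aux19.eq_matOf ⟨hA.1, hA.2⟩
    subst hAeq
    constructor
    · rintro ⟨S, hSfin, hSA, hSclosed⟩
      classical
      set V := Submodule.span (ZMod p) S with hV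
      have hVfin := Aux19.span_set_finite hSfin
      have hVdec : ∀ B ∈ V, ∀ i < p, ∀ j < p, matDecimation p i j B ∈ V :=
        Aux19.span_decim_closed
          (fun B hB i hi j hj => Submodule.subset_span (hSclosed B hB i hi j hj))
      have hVsec : ∀ (H : Aux19.APerm p), Aux19.matOf H ∈ V →
          ∀ v : List (ZMod p), Aux19.matOf (Aux19.secL H v) ∈ V := by
        intro H hH v
        induction v generalizing H with
        | nil => exact hH
        | cons a v ih => exact ih (Aux19.secA H a) (Aux19.matOf_secA_mem hH hVdec a)
      have hmemG : Aux19.matOf G ∈ V := Submodule.subset_span hSA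
      have hsub : Set.range (treeSection (⇑g))
          ⊆ (fun M : ℕ → ℕ → ZMod p =>
              if h : ∃ H : Aux19.APerm p, Aux19.matOf H = M then Aux19.theta h.choose
              else id) '' (V : Set (ℕ → ℕ → ZMod p)) := by
        rintro _ ⟨v, rfl⟩
        refine ⟨Aux19.matOf (Aux19.secL G v), hVsec G hmemG v, ?_⟩
        have hex : ∃ H : Aux19.APerm p, Aux19.matOf H = Aux19.matOf (Aux19.secL G v) :=
          ⟨_, rfl⟩
        show (if h : ∃ H : Aux19.APerm p, Aux19.matOf H = Aux19.matOf (Aux19.secL G v) then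
              Aux19.theta h.choose else id) = treeSection (⇑g) v
        rw [dif_pos hex]
        have h1 := Aux19.matOf_sat hex.choose
        rw [hex.choose_spec] at h1
        have hch : hex.choose = Aux19.secL G v :=
          Aux19.sat_faithful h1 (Aux19.matOf_sat _)
        rw [hch, ← hts v]
      exact Set.Finite.subset (hVfin.image _) hsub
    · intro hFS
      have hK1 : (Set.range fun v : List (ZMod p) => Aux19.secL G v).Finite := by
        apply Set.Finite.of_finite_image (f := Aux19.theta) ?_ Aux19.theta_inj.injOn
        have himg : Aux19.theta '' (Set.range fun v : List (ZMod p) => Aux19.secL G v)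
            = Set.range (treeSection (⇑g)) := by
          rw [← Set.range_comp]
          exact congrArg Set.range (funext fun v => (hts v).symm)
        rw [himg]
        exact hFS
      set T : Set (ℕ → ℕ → ZMod p) :=
        Aux19.matOf '' (Set.range fun v : List (ZMod p) => Aux19.secL G v) with hT
      have hTfin : T.Finite := hK1.image _
      refine ⟨(Submodule.span (ZMod p) T : Submodule (ZMod p) (ℕ → ℕ → ZMod p)),
        Aux19.span_set_finite hTfin, ?_, ?_⟩
      · exact Submodule.subset_span ⟨G, ⟨[], rfl⟩, rfl⟩
      · apply Aux19.span_decim_closed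
        rintro _ ⟨_, ⟨v, rfl⟩, rfl⟩ i hi j hj
        apply Aux19.decim_mem_span ?_ hi hj
        intro b
        rw [← Aux19.secL_append G v b]
        exact ⟨_, ⟨v ++ [b], rfl⟩, rfl⟩
end
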